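/- arXiv:2204.09756 — 7 statements merged into one kernel-verified Lean document; each statement's English description precedes it below -/
import Mathlib

section
/- Let W = [W_{ij}] be a symmetric N×N block real matrix and define the block Cholesky recursion Ŵ_{ij} = W_{ij} − Σ_{k=1}^{j−1} Ŵ_{ik} Ŵ_{kk}⁻¹ Ŵ_{jk}ᵀ for 1 ≤ j ≤ i ≤ N. Suppose all diagonal pivots Ŵ_{kk} (k = 1,…,N) are positive definite (in particular this holds when W ≻ 0), and suppose there is a function c : {1,…,N} → {1,…,N} with c(i) ≤ i such that W_{ij} = 0 whenever j < c(i). Then Ŵ_{ij} = 0 for all j < c(i) with j ≤ i; consequently, for every j ≤ i, Ŵ_{ij} = W_{ij} − Σ_{k=max(c(i),c(j))}^{j−1} Ŵ_{ik} Ŵ_{kk}⁻¹ Ŵ_{jk}ᵀ. -/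
open Matrix

/-- The full matrix assembled from an `N × N` family of blocks
(`W i j` is the `(i,j)`-th block, of size `n i × n j`). -/
def ofBlocks {N : ℕ} {n : Fin N → ℕ}
    (W : ∀ i j : Fin N, Matrix (Fin (n i)) (Fin (n j)) ℝ) :
    Matrix ((i : Fin N) × Fin (n i)) ((j : Fin N) × Fin (n j)) ℝ :=
  Matrix.of fun a b => W a.1 b.1 a.2 b.2

/-- The block Cholesky recursion:
`Ŵ i j = W i j − Σ_{k < j} Ŵ i k ⬝ (Ŵ k k)⁻¹ ⬝ (Ŵ j k)ᵀ`. -/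
noncomputable def chol {N : ℕ} {n : Fin N → ℕ}
    (W : ∀ i j : Fin N, Matrix (Fin (n i)) (Fin (n j)) ℝ)
    (i j : Fin N) : Matrix (Fin (n i)) (Fin (n j)) ℝ :=
  W i j - ∑ k : Fin N,
    if h : (k : ℕ) < (j : ℕ) then
      chol W i k * (chol W k k)⁻¹ * (chol W j k)ᵀ
    else 0
termination_by (j : ℕ)
decreasing_by all_goals exact h

lemma chol_zero {N : ℕ} {n : Fin N → ℕ}
    (W : ∀ i j : Fin N, Matrix (Fin (n i)) (Fin (n j)) ℝ)
    (c : Fin N → Fin N)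
    (hW0 : ∀ i j, j < c i → W i j = 0)
    (j i : Fin N) (hj : j < c i) : chol W i j = 0 := by
  rw [chol, hW0 i j hj, zero_sub, neg_eq_zero]
  apply Finset.sum_eq_zero
  intro k _
  split
  · next h =>
    simp [chol_zero W c hW0 k i (lt_trans (show k < j from h) hj), Matrix.zero_mul]
  · rfl
termination_by (j : ℕ)
decreasing_by assumption

/-- If the pivots of the block Cholesky recursion of a symmetric block matrix `W`
are positive definite, and `W i j = 0` whenever `j < c i` (for some `c` with
`c i ≤ i`), then also `Ŵ i j = 0` for `j < c i` with `j ≤ i`, and consequently,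
for `j ≤ i`, the sum in the recursion for `Ŵ i j` may start at
`k = max (c i) (c j)` instead of `k = 1`. -/
theorem stmt2 {N : ℕ} {n : Fin N → ℕ}
    (W : ∀ i j : Fin N, Matrix (Fin (n i)) (Fin (n j)) ℝ)
    (hsym : ∀ i j, W j i = (W i j)ᵀ)
    (hpiv : ∀ k : Fin N, (chol W k k).PosDef)
    (c : Fin N → Fin N) (hc : ∀ i, c i ≤ i)
    (hW0 : ∀ i j, j < c i → W i j = 0) :
    (∀ i j : Fin N, j < c i → j ≤ i → chol W i j = 0) ∧
    (∀ i j : Fin N, j ≤ i → chol W i j =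
      W i j - ∑ k : Fin N,
        if max (c i) (c j) ≤ k ∧ (k : ℕ) < (j : ℕ) then
          chol W i k * (chol W k k)⁻¹ * (chol W j k)ᵀ
        else 0) := by
  have hz := chol_zero W c hW0
  refine ⟨fun i j hj _ => hz j i hj, fun i j _ => ?_⟩
  rw [chol]
  congr 1
  apply Finset.sum_congr rfl
  intro k _
  split
  · next h =>
    by_cases hm : max (c i) (c j) ≤ k
    · rw [if_pos ⟨hm, h⟩]
    · rw [if_neg (fun hc' => hm hc'.1)]
      rcases lt_max_iff.mp (not_le.mp hm) with h1 | h1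
      · simp [hz k i h1, Matrix.zero_mul]
      · simp [hz k j h1, Matrix.mul_zero]
  · next h =>
    rw [if_neg (fun hc' => h hc'.2)]
end

section
/- Let A ∈ ℝ^{n×n}, B ∈ ℝ^{n×p}, E ∈ ℝ^{n×q}, C ∈ ℝ^{m×n}, F ∈ ℝ^{m×q}, K ∈ ℝ^{p×n}, and let Q ∈ ℝ^{m×m} with −Q positive definite, S ∈ ℝ^{m×q}, R ∈ ℝ^{q×q} symmetric. Then there exists a symmetric positive definite P ∈ ℝ^{n×n} with [[−(A+BK)ᵀP − P(A+BK), −PE + CᵀS, Cᵀ], [⋆, FᵀS + SᵀF + R, Fᵀ], [⋆, ⋆, −Q⁻¹]] positive definite if and only if there exist a symmetric positive definite M ∈ ℝ^{n×n} and L ∈ ℝ^{p×n} with [[−(AM + BL) − (AM + BL)ᵀ, −E + MCᵀS, MCᵀ], [⋆, FᵀS + SᵀF + R, Fᵀ], [⋆, ⋆, −Q⁻¹]] positive definite and K = LM⁻¹. -/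
open Matrix

/-- A 3×3 block matrix assembled from its nine blocks. -/
def block3 {I J K : Type*}
    (M11 : Matrix I I ℝ) (M12 : Matrix I J ℝ) (M13 : Matrix I K ℝ)
    (M21 : Matrix J I ℝ) (M22 : Matrix J J ℝ) (M23 : Matrix J K ℝ)
    (M31 : Matrix K I ℝ) (M32 : Matrix K J ℝ) (M33 : Matrix K K ℝ) :
    Matrix ((I ⊕ J) ⊕ K) ((I ⊕ J) ⊕ K) ℝ :=
  Matrix.fromBlocks (Matrix.fromBlocks M11 M12 M21 M22)
    (Matrix.fromRows M13 M23) (Matrix.fromCols M31 M32) M33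



lemma posDef_congr {N : Type*} [Fintype N] [DecidableEq N] {X T : Matrix N N ℝ}
    (hX : X.PosDef) (hT : IsUnit T) : (Tᵀ * X * T).PosDef := by
  have hXt : Xᵀ = X := hX.1
  refine PosDef.of_dotProduct_mulVec_pos ?_ ?_
  · show (Tᵀ * X * T)ᴴ = _
    rw [conjTranspose_eq_transpose_of_trivial, transpose_mul, transpose_mul,
      transpose_transpose, hXt, mul_assoc]
  · intro x hx
    have hTx : T *ᵥ x ≠ 0 := by
      intro h
      exact hx (by simpa [mulVec_zero] using (mulVec_injective_iff_isUnit.mpr hT) (h.trans (mulVec_zero T).symm))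
    have := hX.dotProduct_mulVec_pos hTx
    simpa [← mulVec_mulVec, dotProduct_mulVec, vecMul_transpose, star_trivial] using this


lemma block3_transpose {I J K : Type*}
    (M11 : Matrix I I ℝ) (M12 : Matrix I J ℝ) (M13 : Matrix I K ℝ)
    (M21 : Matrix J I ℝ) (M22 : Matrix J J ℝ) (M23 : Matrix J K ℝ)
    (M31 : Matrix K I ℝ) (M32 : Matrix K J ℝ) (M33 : Matrix K K ℝ) :
    (block3 M11 M12 M13 M21 M22 M23 M31 M32 M33)ᵀ =
      block3 M11ᵀ M21ᵀ M31ᵀ M12ᵀ M22ᵀ M32ᵀ M13ᵀ M23ᵀ M33ᵀ := by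
  simp [block3, fromBlocks_transpose, transpose_fromRows, transpose_fromCols]

lemma block3_mul {I J K : Type*} [Fintype I] [Fintype J] [Fintype K]
    (A11 : Matrix I I ℝ) (A12 : Matrix I J ℝ) (A13 : Matrix I K ℝ)
    (A21 : Matrix J I ℝ) (A22 : Matrix J J ℝ) (A23 : Matrix J K ℝ)
    (A31 : Matrix K I ℝ) (A32 : Matrix K J ℝ) (A33 : Matrix K K ℝ)
    (B11 : Matrix I I ℝ) (B12 : Matrix I J ℝ) (B13 : Matrix I K ℝ)
    (B21 : Matrix J I ℝ) (B22 : Matrix J J ℝ) (B23 : Matrix J K ℝ)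
    (B31 : Matrix K I ℝ) (B32 : Matrix K J ℝ) (B33 : Matrix K K ℝ) :
    block3 A11 A12 A13 A21 A22 A23 A31 A32 A33 *
      block3 B11 B12 B13 B21 B22 B23 B31 B32 B33 =
    block3 (A11*B11 + A12*B21 + A13*B31) (A11*B12 + A12*B22 + A13*B32) (A11*B13 + A12*B23 + A13*B33)
           (A21*B11 + A22*B21 + A23*B31) (A21*B12 + A22*B22 + A23*B32) (A21*B13 + A22*B23 + A23*B33)
           (A31*B11 + A32*B21 + A33*B31) (A31*B12 + A32*B22 + A33*B32) (A31*B13 + A32*B23 + A33*B33) := by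
  simp only [block3, fromBlocks_multiply, fromRows_mul, mul_fromCols,
    fromRows_mul_fromCols, fromCols_mul_fromRows, fromCols_mul_fromBlocks,
    fromBlocks_mul_fromRows, fromBlocks_add]
  ext ((_|_)|_) ((_|_)|_) <;>
    simp [Matrix.add_apply, fromBlocks]

lemma block3_one {I J K : Type*} [DecidableEq I] [DecidableEq J] [DecidableEq K] :
    (block3 (1 : Matrix I I ℝ) 0 0 0 (1 : Matrix J J ℝ) 0 0 0 (1 : Matrix K K ℝ)) = 1 := by
  ext ((_|_)|_) ((_|_)|_) <;>
    simp [block3, fromBlocks, Matrix.one_apply, Sum.inl.injEq]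

lemma congr_block3 {I J K : Type*} [Fintype I] [Fintype J] [Fintype K]
    [DecidableEq I] [DecidableEq J] [DecidableEq K]
    (M : Matrix I I ℝ)
    (X11 : Matrix I I ℝ) (X12 : Matrix I J ℝ) (X13 : Matrix I K ℝ)
    (X21 : Matrix J I ℝ) (X22 : Matrix J J ℝ) (X23 : Matrix J K ℝ)
    (X31 : Matrix K I ℝ) (X32 : Matrix K J ℝ) (X33 : Matrix K K ℝ) :
    (block3 M 0 0 0 1 0 0 0 1)ᵀ *
      block3 X11 X12 X13 X21 X22 X23 X31 X32 X33 *
      (block3 M 0 0 0 1 0 0 0 1) =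
    block3 (Mᵀ*X11*M) (Mᵀ*X12) (Mᵀ*X13) (X21*M) X22 X23 (X31*M) X32 X33 := by
  rw [block3_transpose, block3_mul, block3_mul]
  simp [Matrix.mul_assoc, Matrix.transpose_one]

lemma isUnit_diag_block3 {I J K : Type*} [Fintype I] [Fintype J] [Fintype K]
    [DecidableEq I] [DecidableEq J] [DecidableEq K]
    {M M' : Matrix I I ℝ} (h : M * M' = 1) :
    IsUnit (block3 M 0 0 0 (1 : Matrix J J ℝ) 0 0 0 (1 : Matrix K K ℝ)) := by
  rw [Matrix.isUnit_iff_isUnit_det]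
  have h2 : (block3 M 0 0 0 (1 : Matrix J J ℝ) 0 0 0 (1 : Matrix K K ℝ)) *
      (block3 M' 0 0 0 1 0 0 0 1) = 1 := by
    rw [block3_mul]; simpa [h] using block3_one
  have := congrArg Matrix.det h2
  rw [Matrix.det_mul, Matrix.det_one] at this
  exact IsUnit.of_mul_eq_one _ this


/-- Full-state feedback (Q,S,R)-dissipativation: the closed-loop dissipativity
LMI is feasible (in `P ≻ 0`) iff its change-of-variables reformulation is
feasible (in `M ≻ 0` and `L`, with `K = L M⁻¹`). -/
theorem stmt7 {n p q m : ℕ}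
    (A : Matrix (Fin n) (Fin n) ℝ) (B : Matrix (Fin n) (Fin p) ℝ)
    (E : Matrix (Fin n) (Fin q) ℝ) (C : Matrix (Fin m) (Fin n) ℝ)
    (F : Matrix (Fin m) (Fin q) ℝ) (K : Matrix (Fin p) (Fin n) ℝ)
    (Q : Matrix (Fin m) (Fin m) ℝ) (hQ : (-Q).PosDef)
    (S : Matrix (Fin m) (Fin q) ℝ)
    (R : Matrix (Fin q) (Fin q) ℝ) (hR : Rᵀ = R) :
    (∃ P : Matrix (Fin n) (Fin n) ℝ, P.PosDef ∧
      (block3 (-((A + B * K)ᵀ * P) - P * (A + B * K)) (-(P * E) + Cᵀ * S) Cᵀ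
              (-(P * E) + Cᵀ * S)ᵀ (Fᵀ * S + Sᵀ * F + R) Fᵀ
              C F (-Q⁻¹)).PosDef) ↔
    (∃ (M : Matrix (Fin n) (Fin n) ℝ) (L : Matrix (Fin p) (Fin n) ℝ),
      M.PosDef ∧
      (block3 (-(A * M + B * L) - (A * M + B * L)ᵀ) (-E + M * Cᵀ * S) (M * Cᵀ)
              (-E + M * Cᵀ * S)ᵀ (Fᵀ * S + Sᵀ * F + R) Fᵀ
              (M * Cᵀ)ᵀ F (-Q⁻¹)).PosDef ∧
      K = L * M⁻¹) := by
  constructor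
  · rintro ⟨P, hP, hLMI⟩
    set M : Matrix (Fin n) (Fin n) ℝ := P⁻¹ with hMdef
    have hM : M.PosDef := hP.inv
    have hPdet : IsUnit P.det := P.isUnit_iff_isUnit_det.mp hP.isUnit
    have hMdet : IsUnit M.det := M.isUnit_iff_isUnit_det.mp hM.isUnit
    have hPM : P * M = 1 := Matrix.mul_nonsing_inv P hPdet
    have hMP : M * P = 1 := Matrix.nonsing_inv_mul P hPdet
    have hMt : Mᵀ = M := by
      rw [← conjTranspose_eq_transpose_of_trivial]; exact hM.1
    have hPt : Pᵀ = P := by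
      rw [← conjTranspose_eq_transpose_of_trivial]; exact hP.1
    refine ⟨M, K * M, hM, ?_, ?_⟩
    · have hT : IsUnit (block3 M 0 0 0 (1 : Matrix (Fin q) (Fin q) ℝ) 0 0 0
          (1 : Matrix (Fin m) (Fin m) ℝ)) := isUnit_diag_block3 hMP
      have hcong := posDef_congr hLMI hT
      rw [congr_block3, hMt] at hcong
      have hmm : ∀ {k : ℕ} (X : Matrix (Fin n) (Fin k) ℝ), M * (P * X) = X := by
        intro k X; rw [← Matrix.mul_assoc, hMP, Matrix.one_mul]
      have e11 : M * (-((A + B * K)ᵀ * P) - P * (A + B * K)) * M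
          = -(A * M + B * (K * M)) - (A * M + B * (K * M))ᵀ := by
        simp only [Matrix.mul_sub, Matrix.sub_mul, Matrix.mul_neg, Matrix.neg_mul,
          transpose_add, transpose_mul, Matrix.mul_add, Matrix.add_mul,
          Matrix.mul_assoc, hmm, hMt]
        simp only [hPM, hMP, Matrix.mul_one]
        abel
      have e12 : M * (-(P * E) + Cᵀ * S) = -E + M * Cᵀ * S := by
        simp only [Matrix.mul_add, Matrix.mul_neg, hmm, Matrix.mul_assoc]
      have e21 : (-(P * E) + Cᵀ * S)ᵀ * M = (-E + M * Cᵀ * S)ᵀ := by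
        rw [← e12, transpose_mul, hMt]
      have e31 : C * M = (M * Cᵀ)ᵀ := by
        rw [transpose_mul, transpose_transpose, hMt]
      rw [e11, e12, e21, e31] at hcong
      exact hcong
    · have : M⁻¹ = P := by
        rw [hMdef, Matrix.nonsing_inv_nonsing_inv P hPdet]
      rw [this, Matrix.mul_assoc, hMP, Matrix.mul_one]
  · rintro ⟨M, L, hM, hLMI, hK⟩
    subst hK
    set P : Matrix (Fin n) (Fin n) ℝ := M⁻¹ with hPdef
    have hP : P.PosDef := hM.inv
    have hMdet : IsUnit M.det := M.isUnit_iff_isUnit_det.mp hM.isUnit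
    have hMP : M * P = 1 := Matrix.mul_nonsing_inv M hMdet
    have hPM : P * M = 1 := Matrix.nonsing_inv_mul M hMdet
    have hMt : Mᵀ = M := by
      rw [← conjTranspose_eq_transpose_of_trivial]; exact hM.1
    have hPt : Pᵀ = P := by
      rw [← conjTranspose_eq_transpose_of_trivial]; exact hP.1
    refine ⟨P, hP, ?_⟩
    have hT : IsUnit (block3 P 0 0 0 (1 : Matrix (Fin q) (Fin q) ℝ) 0 0 0
        (1 : Matrix (Fin m) (Fin m) ℝ)) := isUnit_diag_block3 hPM
    have hcong := posDef_congr hLMI hT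
    rw [congr_block3, hPt] at hcong
    have hpm : ∀ {k : ℕ} (X : Matrix (Fin n) (Fin k) ℝ), P * (M * X) = X := by
      intro k X; rw [← Matrix.mul_assoc, hPM, Matrix.one_mul]
    have e11 : P * (-(A * M + B * L) - (A * M + B * L)ᵀ) * P
        = -((A + B * (L * M⁻¹))ᵀ * P) - P * (A + B * (L * M⁻¹)) := by
      rw [← hPdef]
      simp only [Matrix.mul_sub, Matrix.sub_mul, Matrix.mul_neg, Matrix.neg_mul,
        transpose_add, transpose_mul, Matrix.mul_add, Matrix.add_mul,
        Matrix.mul_assoc, hpm, hMt, hPt]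
      simp only [hPM, hMP, Matrix.mul_one]
      abel
    have e12 : P * (-E + M * Cᵀ * S) = -(P * E) + Cᵀ * S := by
      simp only [Matrix.mul_add, Matrix.mul_neg, Matrix.mul_assoc, hpm]
    have e21 : (-E + M * Cᵀ * S)ᵀ * P = (-(P * E) + Cᵀ * S)ᵀ := by
      rw [← e12, transpose_mul, hPt]
    have e13 : P * (M * Cᵀ) = Cᵀ := hpm _
    have e31 : (M * Cᵀ)ᵀ * P = C := by
      rw [transpose_mul, transpose_transpose, hMt, Matrix.mul_assoc, hMP,
        Matrix.mul_one]
    rw [e11, e12, e21, e13, e31] at hcong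
    exact hcong
end

section
/- Let A ∈ ℝ^{n×n}, B ∈ ℝ^{n×p}, E ∈ ℝ^{n×q}, C ∈ ℝ^{m×n}, D ∈ ℝ^{m×p}, F ∈ ℝ^{m×q}, K ∈ ℝ^{p×n}, and γ > 0. Then there exists a symmetric positive definite P ∈ ℝ^{n×n} with [[−(A+BK)ᵀP − P(A+BK), −PE, −(C+DK)ᵀ], [⋆, γI, −Fᵀ], [⋆, ⋆, γI]] positive definite if and only if there exist a symmetric positive definite M ∈ ℝ^{n×n} and L ∈ ℝ^{p×n} with [[−(AM + BL) − (AM + BL)ᵀ, −E, −MCᵀ − LᵀDᵀ], [⋆, γI, −Fᵀ], [⋆, ⋆, γI]] positive definite and K = LM⁻¹. -/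
open Matrix

lemma posDef_conj {ν : Type*} [Fintype ν] [DecidableEq ν]
    {G X : Matrix ν ν ℝ} (hG : G.PosDef) (hX : IsUnit X) :
    (X * G * Xᵀ).PosDef := by
  have hXT : Xᵀ = Xᴴ := (conjTranspose_eq_transpose_of_trivial X).symm
  have hXTu : IsUnit Xᵀ := (Matrix.isUnit_transpose (A := X)).2 hX
  rw [posDef_iff_dotProduct_mulVec]
  constructor
  · rw [hXT]
    exact (hG.posSemidef.mul_mul_conjTranspose_same X).isHermitian
  · intro x hx
    have hinj := mulVec_injective_iff_isUnit.2 hXTu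
    have hx' : Xᵀ *ᵥ x ≠ 0 := fun h => hx (hinj (by simpa using h))
    have := (posDef_iff_dotProduct_mulVec.1 hG).2 hx'
    simpa [star_mulVec, dotProduct_mulVec, ← vecMul_vecMul, mulVec_transpose,
      vecMul_transpose, dotProduct_comm] using this

lemma block3_conj {ι κ μ : Type*} [Fintype ι] [Fintype κ] [Fintype μ]
    [DecidableEq ι] [DecidableEq κ] [DecidableEq μ]
    (X a : Matrix ι ι ℝ) (b : Matrix ι κ ℝ) (c : Matrix ι μ ℝ)
    (d : Matrix κ ι ℝ) (e : Matrix κ κ ℝ) (f : Matrix κ μ ℝ)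
    (g : Matrix μ ι ℝ) (h : Matrix μ κ ℝ) (i : Matrix μ μ ℝ) :
    (fromBlocks (fromBlocks X 0 0 1) 0 0 1 : Matrix ((ι ⊕ κ) ⊕ μ) _ ℝ) *
        (block3 a b c d e f g h i) *
        (fromBlocks (fromBlocks X 0 0 1) 0 0 1)ᵀ
      = block3 (X * a * Xᵀ) (X * b) (X * c) (d * Xᵀ) e f (g * Xᵀ) h i := by
  unfold block3
  rw [fromBlocks_transpose, fromBlocks_transpose, fromBlocks_multiply, fromBlocks_multiply]
  simp [fromBlocks_multiply, fromBlocks_mul_fromRows, fromCols_mul_fromBlocks,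
    fromBlocks_transpose, Matrix.mul_assoc]

lemma isUnit_T {ι κ μ : Type*} [Fintype ι] [Fintype κ] [Fintype μ]
    [DecidableEq ι] [DecidableEq κ] [DecidableEq μ]
    {X : Matrix ι ι ℝ} (hX : IsUnit X.det) :
    IsUnit (fromBlocks (fromBlocks X 0 0 1) 0 0 1 : Matrix ((ι ⊕ κ) ⊕ μ) ((ι ⊕ κ) ⊕ μ) ℝ) := by
  rw [Matrix.isUnit_iff_isUnit_det, det_fromBlocks_zero₂₁, det_fromBlocks_zero₂₁]
  simpa using hX

/-- Full-state feedback H∞-optimal control: the closed-loop bounded-real LMI is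
feasible (in `P ≻ 0`) iff its change-of-variables reformulation is feasible
(in `M ≻ 0` and `L`, with `K = L M⁻¹`). -/
theorem stmt8 {n p q m : ℕ}
    (A : Matrix (Fin n) (Fin n) ℝ) (B : Matrix (Fin n) (Fin p) ℝ)
    (E : Matrix (Fin n) (Fin q) ℝ) (C : Matrix (Fin m) (Fin n) ℝ)
    (D : Matrix (Fin m) (Fin p) ℝ) (F : Matrix (Fin m) (Fin q) ℝ)
    (K : Matrix (Fin p) (Fin n) ℝ) (γ : ℝ) (hγ : 0 < γ) :
    (∃ P : Matrix (Fin n) (Fin n) ℝ, P.PosDef ∧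
      (block3 (-((A + B * K)ᵀ * P) - P * (A + B * K)) (-(P * E)) (-(C + D * K)ᵀ)
              (-(P * E))ᵀ (γ • (1 : Matrix (Fin q) (Fin q) ℝ)) (-Fᵀ)
              (-(C + D * K)) (-F) (γ • (1 : Matrix (Fin m) (Fin m) ℝ))).PosDef) ↔
    (∃ (M : Matrix (Fin n) (Fin n) ℝ) (L : Matrix (Fin p) (Fin n) ℝ),
      M.PosDef ∧
      (block3 (-(A * M + B * L) - (A * M + B * L)ᵀ) (-E) (-(M * Cᵀ) - Lᵀ * Dᵀ)
              (-E)ᵀ (γ • (1 : Matrix (Fin q) (Fin q) ℝ)) (-Fᵀ)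
              (-(M * Cᵀ) - Lᵀ * Dᵀ)ᵀ (-F) (γ • (1 : Matrix (Fin m) (Fin m) ℝ))).PosDef ∧
      K = L * M⁻¹) := by
  constructor
  · rintro ⟨P, hP, hLMI⟩
    have hPdet : IsUnit P.det := isUnit_iff_ne_zero.2 hP.det_pos.ne'
    set M := P⁻¹ with hMdef
    have hM : M.PosDef := hP.inv
    have hMdet : IsUnit M.det := isUnit_iff_ne_zero.2 hM.det_pos.ne'
    have hPM : P * M = 1 := mul_nonsing_inv _ hPdet
    have hMP : M * P = 1 := nonsing_inv_mul _ hPdet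
    have hMs : Mᵀ = M := by
      rw [← conjTranspose_eq_transpose_of_trivial]; exact hM.isHermitian
    have hPs : Pᵀ = P := by
      rw [← conjTranspose_eq_transpose_of_trivial]; exact hP.isHermitian
    refine ⟨M, K * M, hM, ?_, ?_⟩
    · have key := posDef_conj hLMI (isUnit_T (κ := Fin q) (μ := Fin m) hMdet)
      rw [block3_conj] at key
      have e11 : M * (-((A + B * K)ᵀ * P) - P * (A + B * K)) * Mᵀ
          = -(A * M + B * (K * M)) - (A * M + B * (K * M))ᵀ := by
        simp only [hMs, transpose_add, transpose_mul, Matrix.sub_mul, Matrix.mul_sub,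
          neg_mul, mul_neg, Matrix.mul_assoc, hPM, hMP, Matrix.mul_one, Matrix.add_mul,
          Matrix.mul_add]
        rw [show M * (P * (A * M)) = M * P * (A * M) by rw [Matrix.mul_assoc],
          show M * (P * (B * (K * M))) = M * P * (B * (K * M)) by rw [Matrix.mul_assoc], hMP]
        simp only [Matrix.one_mul]
        abel
      have e12 : M * -(P * E) = -E := by
        rw [Matrix.mul_neg, ← Matrix.mul_assoc, hMP, Matrix.one_mul]
      have e13 : M * -(C + D * K)ᵀ = -(M * Cᵀ) - (K * M)ᵀ * Dᵀ := by
        simp only [transpose_add, transpose_mul, hMs, Matrix.mul_neg, Matrix.mul_add,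
          Matrix.mul_assoc]
        abel
      have e21 : (-(P * E))ᵀ * Mᵀ = (-E)ᵀ := by
        simp only [transpose_neg, transpose_mul, hMs, hPs, Matrix.neg_mul, Matrix.mul_assoc,
          hPM, Matrix.mul_one]
      have e31 : -(C + D * K) * Mᵀ = (-(M * Cᵀ) - (K * M)ᵀ * Dᵀ)ᵀ := by
        have := congrArg Matrix.transpose e13
        simpa [transpose_mul, hMs] using this
      rwa [e11, e12, e13, e21, e31] at key
    · rw [Matrix.mul_assoc, hMdef, nonsing_inv_nonsing_inv _ hPdet, ← hMdef, hMP,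
        Matrix.mul_one]
  · rintro ⟨M, L, hM, hLMI, hK⟩
    have hMdet : IsUnit M.det := isUnit_iff_ne_zero.2 hM.det_pos.ne'
    set P := M⁻¹ with hPdef
    have hP : P.PosDef := hM.inv
    have hPdet : IsUnit P.det := isUnit_iff_ne_zero.2 hP.det_pos.ne'
    have hMP : M * P = 1 := mul_nonsing_inv _ hMdet
    have hPM : P * M = 1 := nonsing_inv_mul _ hMdet
    have hMs : Mᵀ = M := by
      rw [← conjTranspose_eq_transpose_of_trivial]; exact hM.isHermitian
    have hPs : Pᵀ = P := by
      rw [← conjTranspose_eq_transpose_of_trivial]; exact hP.isHermitian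
    have hL : L = K * M := by rw [hK, Matrix.mul_assoc, hPM, Matrix.mul_one]
    refine ⟨P, hP, ?_⟩
    have key := posDef_conj hLMI (isUnit_T (κ := Fin q) (μ := Fin m) hPdet)
    rw [block3_conj] at key
    have f11 : P * (-(A * M + B * L) - (A * M + B * L)ᵀ) * Pᵀ
        = -((A + B * K)ᵀ * P) - P * (A + B * K) := by
      rw [hL, hPs]
      simp only [transpose_add, transpose_mul, hMs, Matrix.sub_mul, Matrix.mul_sub,
        neg_mul, mul_neg, Matrix.add_mul, Matrix.mul_add, Matrix.mul_assoc, hMP, hPM,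
        Matrix.mul_one]
      rw [show P * (M * (Aᵀ * P)) = Aᵀ * P by rw [← Matrix.mul_assoc, hPM, Matrix.one_mul],
        show P * (M * (Kᵀ * (Bᵀ * P))) = Kᵀ * (Bᵀ * P) by
          rw [← Matrix.mul_assoc, hPM, Matrix.one_mul]]
      abel
    have f12 : P * -E = -(P * E) := by rw [Matrix.mul_neg]
    have f13 : P * (-(M * Cᵀ) - Lᵀ * Dᵀ) = -(C + D * K)ᵀ := by
      rw [hL]
      simp only [transpose_add, transpose_mul, hMs, Matrix.mul_sub, Matrix.mul_neg,
        ← Matrix.mul_assoc, hPM, Matrix.one_mul]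
      abel
    have f21 : (-E)ᵀ * Pᵀ = (-(P * E))ᵀ := by
      simp [transpose_neg, transpose_mul, hPs]
    have f31 : (-(M * Cᵀ) - Lᵀ * Dᵀ)ᵀ * Pᵀ = -(C + D * K) := by
      have := congrArg Matrix.transpose f13
      simpa [transpose_mul, hPs] using this
    rwa [f11, f12, f13, f21, f31] at key
end

section
/- Let A ∈ ℝ^{n×n}, C ∈ ℝ^{m×n}, and L ∈ ℝ^{n×m}. Then A − LC is Hurwitz if and only if there exist a symmetric positive definite P ∈ ℝ^{n×n} and K ∈ ℝ^{n×m} such that −AᵀP − PA + CᵀKᵀ + KC is positive definite and L = P⁻¹K. -/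
open Matrix

/-- A real square matrix is Hurwitz if every root in `ℂ` of its characteristic
polynomial has strictly negative real part. -/
def IsHurwitz {n : ℕ} (A : Matrix (Fin n) (Fin n) ℝ) : Prop :=
  ∀ z : ℂ, ((A.map (Complex.ofReal)).charpoly).IsRoot z → z.re < 0

section LyapunovAux

open Matrix Polynomial NormedSpace Filter MeasureTheory Set Topology

attribute [local instance] Matrix.linftyOpNormedRing Matrix.linftyOpNormedAlgebra

variable {N : ℕ}

noncomputable instance matrixContinuousENorm : ContinuousENorm (Matrix (Fin N) (Fin N) ℝ) :=
  SeminormedAddGroup.toContinuousENorm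

instance matrixPseudoMetrizable :
    TopologicalSpace.PseudoMetrizableSpace (Matrix (Fin N) (Fin N) ℝ) :=
  inferInstanceAs (TopologicalSpace.PseudoMetrizableSpace (Fin N → Fin N → ℝ))

variable {N : ℕ}

lemma charpoly_isRoot_iff (M : Matrix (Fin N) (Fin N) ℂ) (z : ℂ) :
    M.charpoly.IsRoot z ↔ ∃ v : Fin N → ℂ, v ≠ 0 ∧ M *ᵥ v = z • v := by
  have heval : M.charpoly.eval z = (z • (1 : Matrix (Fin N) (Fin N) ℂ) - M).det := by
    rw [Matrix.charpoly, ← coe_evalRingHom, RingHom.map_det]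
    congr 1
    ext i j
    by_cases h : i = j <;>
      simp [charmatrix_apply, h, Matrix.one_apply, Matrix.smul_apply]
  constructor
  · intro hz
    rw [IsRoot.def, heval] at hz
    obtain ⟨v, hv0, hv⟩ := (Matrix.exists_mulVec_eq_zero_iff).2 hz
    refine ⟨v, hv0, ?_⟩
    have := hv
    rw [Matrix.sub_mulVec, Matrix.smul_mulVec, Matrix.one_mulVec, sub_eq_zero] at this
    exact this.symm
  · rintro ⟨v, hv0, hv⟩
    rw [IsRoot.def, heval]
    refine (Matrix.exists_mulVec_eq_zero_iff).1 ⟨v, hv0, ?_⟩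
    rw [Matrix.sub_mulVec, Matrix.smul_mulVec, Matrix.one_mulVec, hv, sub_self]



noncomputable def mulVecCLM (v : Fin N → ℂ) :
    Matrix (Fin N) (Fin N) ℂ →L[ℂ] (Fin N → ℂ) :=
  LinearMap.toContinuousLinearMap
    { toFun := fun A => A *ᵥ v
      map_add' := fun A B => Matrix.add_mulVec A B v
      map_smul' := fun c A => Matrix.smul_mulVec c A v }

lemma mulVecCLM_apply (v : Fin N → ℂ) (A : Matrix (Fin N) (Fin N) ℂ) :
    mulVecCLM v A = A *ᵥ v := rfl

lemma exp_mulVec_gen (Mc : Matrix (Fin N) (Fin N) ℂ) (μ : ℂ) (v : Fin N → ℂ)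
    (hv : ((Mc - μ • 1) ^ N) *ᵥ v = 0) (t : ℝ) :
    exp ((t : ℂ) • Mc) *ᵥ v
      = Complex.exp ((t : ℂ) * μ) •
          ∑ j ∈ Finset.range N, (((t : ℂ) ^ j * ((j.factorial : ℂ)⁻¹)) •
            (((Mc - μ • 1) ^ j) *ᵥ v)) := by
  set Nm := Mc - μ • (1 : Matrix (Fin N) (Fin N) ℂ) with hNm
  have hdecomp : (t : ℂ) • Mc = ((t : ℂ) * μ) • (1 : Matrix (Fin N) (Fin N) ℂ)
      + (t : ℂ) • Nm := by
    rw [hNm, smul_sub, smul_smul, ← add_sub_assoc]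
    abel
  have hcomm : Commute (((t : ℂ) * μ) • (1 : Matrix (Fin N) (Fin N) ℂ)) ((t : ℂ) • Nm) := by
    refine Commute.smul_left ?_ _
    exact (Commute.one_left _).smul_right _
  rw [hdecomp, Matrix.exp_add_of_commute _ _ hcomm]
  have h1 : exp (((t : ℂ) * μ) • (1 : Matrix (Fin N) (Fin N) ℂ))
      = Complex.exp ((t : ℂ) * μ) • 1 := by
    have h := algebraMap_exp_comm (𝔸 := Matrix (Fin N) (Fin N) ℂ) ((t : ℂ) * μ)
    rw [Algebra.algebraMap_eq_smul_one, Algebra.algebraMap_eq_smul_one,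
      ← congrFun Complex.exp_eq_exp_ℂ] at h
    exact h.symm
  rw [h1]
  have h2 : exp ((t : ℂ) • Nm) *ᵥ v
      = ∑ j ∈ Finset.range N, (((t : ℂ) ^ j * ((j.factorial : ℂ)⁻¹)) • ((Nm ^ j) *ᵥ v)) := by
    rw [exp_eq_tsum ℂ]
    rw [← mulVecCLM_apply v]
    rw [(mulVecCLM v).map_tsum (expSeries_summable' (𝕂 := ℂ) ((t : ℂ) • Nm))]
    rw [tsum_eq_sum (s := Finset.range N) ?side]
    case side =>
      intro j hj
      rw [Finset.mem_range, not_lt] at hj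
      rw [_root_.map_smul, mulVecCLM_apply, _root_.smul_pow]
      have : Nm ^ j = Nm ^ (j - N) * Nm ^ N := by rw [← pow_add]; congr 1; omega
      rw [this, Matrix.smul_mulVec, ← Matrix.mulVec_mulVec, hv, Matrix.mulVec_zero,
        smul_zero, smul_zero]
    refine Finset.sum_congr rfl fun j hj => ?_
    rw [_root_.map_smul, mulVecCLM_apply, _root_.smul_pow, Matrix.smul_mulVec,
      smul_smul, mul_comm]
  rw [Matrix.smul_mul, Matrix.one_mul, Matrix.smul_mulVec, h2]

lemma exp_mulVec_bound (Mc : Matrix (Fin N) (Fin N) ℂ) {β : ℝ}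
    (hβ : ∀ μ : ℂ, Mc.charpoly.IsRoot μ → μ.re ≤ β) (v : Fin N → ℂ) :
    ∃ c : ℝ, 0 ≤ c ∧ ∀ t : ℝ, 0 ≤ t →
      ‖exp ((t : ℂ) • Mc) *ᵥ v‖ ≤ c * ((1 + t) ^ N * Real.exp (β * t)) := by
  set f : Module.End ℂ (Fin N → ℂ) := Matrix.toLinAlgEquiv' Mc with hf
  have hv : v ∈ ⨆ μ : ℂ, f.maxGenEigenspace μ := by
    rw [Module.End.iSup_maxGenEigenspace_eq_top f]
    trivial
  refine Submodule.iSup_induction (motive := fun w => ∃ c : ℝ, 0 ≤ c ∧ ∀ t : ℝ, 0 ≤ t →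
      ‖exp ((t : ℂ) • Mc) *ᵥ w‖ ≤ c * ((1 + t) ^ N * Real.exp (β * t)))
    (fun μ => f.maxGenEigenspace μ) hv ?_ ?_ ?_
  · -- mem case
    intro μ w hw
    by_cases hw0 : w = 0
    · exact ⟨0, le_refl 0, fun t ht => by simp [hw0]⟩
    have hw' : w ∈ f.maxGenEigenspace μ := hw
    have hwN : ((Mc - μ • 1) ^ N) *ᵥ w = 0 := by
      rw [Module.End.maxGenEigenspace_eq_genEigenspace_finrank,
        Module.End.mem_genEigenspace_nat] at hw'
      have h1 : f - μ • 1 = Matrix.toLinAlgEquiv' (Mc - μ • (1 : Matrix (Fin N) (Fin N) ℂ)) := by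
        rw [map_sub, _root_.map_smul, _root_.map_one]
      rw [h1, ← map_pow] at hw'
      rw [Module.finrank_fin_fun ℂ] at hw'
      exact hw'
    have hNpos : 0 < N := by
      by_contra h
      push_neg at h
      have hN0 : N = 0 := Nat.le_zero.mp h
      subst hN0
      exact hw0 (Subsingleton.elim w 0)
    have hreμ : μ.re ≤ β := by
      have hdetN : ((Mc - μ • 1) ^ N).det = 0 :=
        (Matrix.exists_mulVec_eq_zero_iff).1 ⟨w, hw0, hwN⟩
      rw [Matrix.det_pow] at hdetN
      have hdet : (Mc - μ • 1).det = 0 := pow_eq_zero_iff hNpos.ne' |>.1 hdetN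
      obtain ⟨u, hu0, hu⟩ := (Matrix.exists_mulVec_eq_zero_iff).2 hdet
      rw [Matrix.sub_mulVec, Matrix.smul_mulVec, Matrix.one_mulVec, sub_eq_zero] at hu
      exact hβ μ ((charpoly_isRoot_iff Mc μ).2 ⟨u, hu0, hu⟩)
    refine ⟨∑ j ∈ Finset.range N, ‖((Mc - μ • 1) ^ j) *ᵥ w‖, by positivity, fun t ht => ?_⟩
    rw [exp_mulVec_gen Mc μ w hwN t, norm_smul]
    have hexp : ‖Complex.exp ((t : ℂ) * μ)‖ = Real.exp (t * μ.re) := by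
      rw [Complex.norm_exp]
      congr 1
      simp [Complex.mul_re]
    rw [hexp]
    have hsum : ‖∑ j ∈ Finset.range N, (((t : ℂ) ^ j * ((j.factorial : ℂ)⁻¹)) •
        (((Mc - μ • 1) ^ j) *ᵥ w))‖
        ≤ (1 + t) ^ N * ∑ j ∈ Finset.range N, ‖((Mc - μ • 1) ^ j) *ᵥ w‖ := by
      refine (norm_sum_le _ _).trans ?_
      rw [Finset.mul_sum]
      refine Finset.sum_le_sum fun j hj => ?_
      rw [norm_smul]
      have h1 : ‖(t : ℂ) ^ j * ((j.factorial : ℂ)⁻¹)‖ ≤ (1 + t) ^ N := by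
        rw [norm_mul, norm_pow, norm_inv, Complex.norm_real, Complex.norm_natCast,
          Real.norm_of_nonneg ht]
        have h2 : t ^ j ≤ (1 + t) ^ N := by
          calc t ^ j ≤ (1 + t) ^ j := by
                refine pow_le_pow_left₀ ht (by linarith) j
            _ ≤ (1 + t) ^ N := by
                refine pow_le_pow_right₀ (by linarith) (Finset.mem_range.1 hj).le
        have h3 : ((j.factorial : ℝ))⁻¹ ≤ 1 := by
          rw [inv_le_one_iff₀]
          right
          exact_mod_cast Nat.one_le_iff_ne_zero.2 (Nat.factorial_ne_zero j)
        calc t ^ j * ((j.factorial : ℝ))⁻¹ ≤ (1 + t) ^ N * 1 := by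
              refine mul_le_mul h2 h3 (by positivity) (by positivity)
          _ = (1 + t) ^ N := mul_one _
      refine mul_le_mul_of_nonneg_right h1 (norm_nonneg _)
    calc Real.exp (t * μ.re) * ‖∑ j ∈ Finset.range N, (((t : ℂ) ^ j * ((j.factorial : ℂ)⁻¹)) •
        (((Mc - μ • 1) ^ j) *ᵥ w))‖
        ≤ Real.exp (β * t) * ((1 + t) ^ N * ∑ j ∈ Finset.range N, ‖((Mc - μ • 1) ^ j) *ᵥ w‖) := by
          refine mul_le_mul ?_ hsum (norm_nonneg _) (Real.exp_nonneg _)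
          rw [Real.exp_le_exp]
          calc t * μ.re ≤ t * β := mul_le_mul_of_nonneg_left hreμ ht
            _ = β * t := mul_comm _ _
      _ = (∑ j ∈ Finset.range N, ‖((Mc - μ • 1) ^ j) *ᵥ w‖) * ((1 + t) ^ N * Real.exp (β * t)) :=
          by ring
  · exact ⟨0, le_refl 0, fun t ht => by simp⟩
  · rintro x y ⟨c₁, hc₁, h₁⟩ ⟨c₂, hc₂, h₂⟩
    refine ⟨c₁ + c₂, by positivity, fun t ht => ?_⟩
    rw [Matrix.mulVec_add]
    calc ‖exp ((t : ℂ) • Mc) *ᵥ x + exp ((t : ℂ) • Mc) *ᵥ y‖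
        ≤ ‖exp ((t : ℂ) • Mc) *ᵥ x‖ + ‖exp ((t : ℂ) • Mc) *ᵥ y‖ := norm_add_le _ _
      _ ≤ c₁ * ((1 + t) ^ N * Real.exp (β * t)) + c₂ * ((1 + t) ^ N * Real.exp (β * t)) :=
          add_le_add (h₁ t ht) (h₂ t ht)
      _ = (c₁ + c₂) * ((1 + t) ^ N * Real.exp (β * t)) := by ring



section NormHelpers
variable {α : Type*} [NontriviallyNormedField α] [NormedAlgebra ℝ α]

lemma norm_matrix_le_sum (A : Matrix (Fin N) (Fin N) α) :
    ‖A‖ ≤ ∑ j, ‖A *ᵥ Pi.single j 1‖ := by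
  rw [Matrix.linfty_opNorm_eq_opNorm]
  refine ContinuousLinearMap.opNorm_le_bound _ (by positivity) fun v => ?_
  have hv : A *ᵥ v = ∑ j, (v j) • (A *ᵥ Pi.single j 1) := by
    have h1 : v = ∑ j, Pi.single j (v j) := (Finset.univ_sum_single v).symm
    conv_lhs => rw [h1]
    simp only [← Matrix.mulVecLin_apply, map_sum]
    refine Finset.sum_congr rfl fun j _ => ?_
    have : (Pi.single j (v j) : Fin N → α) = (v j) • (Pi.single j 1 : Fin N → α) := by
      rw [← Pi.single_smul, smul_eq_mul, mul_one]
    rw [this, _root_.map_smul, Matrix.mulVecLin_apply]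
  show ‖A *ᵥ v‖ ≤ _
  rw [hv]
  calc ‖∑ j, (v j) • (A *ᵥ Pi.single j 1)‖ ≤ ∑ j, ‖(v j) • (A *ᵥ Pi.single j 1)‖ :=
        norm_sum_le _ _
    _ ≤ ∑ j, ‖A *ᵥ Pi.single j 1‖ * ‖v‖ := by
        refine Finset.sum_le_sum fun j _ => ?_
        rw [norm_smul]
        calc ‖v j‖ * ‖A *ᵥ Pi.single j 1‖ ≤ ‖v‖ * ‖A *ᵥ Pi.single j 1‖ :=
              mul_le_mul_of_nonneg_right (norm_le_pi_norm v j) (norm_nonneg _)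
          _ = ‖A *ᵥ Pi.single j 1‖ * ‖v‖ := mul_comm _ _
    _ = (∑ j, ‖A *ᵥ Pi.single j 1‖) * ‖v‖ := (Finset.sum_mul _ _ _).symm

end NormHelpers

lemma exists_beta {M : Matrix (Fin N) (Fin N) ℝ}
    (hM : ∀ z : ℂ, ((M.map Complex.ofReal).charpoly).IsRoot z → z.re < 0) :
    ∃ β : ℝ, β < 0 ∧ ∀ μ : ℂ, ((M.map Complex.ofReal).charpoly).IsRoot μ → μ.re ≤ β := by
  set p := (M.map Complex.ofReal).charpoly with hp
  have hp0 : p ≠ 0 := (Matrix.charpoly_monic _).ne_zero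
  set s := p.roots.toFinset.image Complex.re with hs
  rcases s.eq_empty_or_nonempty with h | h
  · refine ⟨-1, by norm_num, fun μ hμ => ?_⟩
    have hmem : μ.re ∈ s := Finset.mem_image_of_mem Complex.re
      (Multiset.mem_toFinset.2 ((Polynomial.mem_roots hp0).2 hμ))
    rw [h] at hmem
    exact absurd hmem (Finset.notMem_empty _)
  · refine ⟨s.max' h, ?_, fun μ hμ => ?_⟩
    · obtain ⟨z, hz, hze⟩ := Finset.mem_image.1 (s.max'_mem h)
      rw [← hze]
      exact hM z ((Polynomial.mem_roots hp0).1 (Multiset.mem_toFinset.1 hz))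
    · exact Finset.le_max' s _ (Finset.mem_image_of_mem Complex.re
        (Multiset.mem_toFinset.2 ((Polynomial.mem_roots hp0).2 hμ)))



lemma norm_map_ofReal (A : Matrix (Fin N) (Fin N) ℝ) : ‖A.map Complex.ofReal‖ = ‖A‖ := by
  rw [Matrix.linfty_opNorm_def, Matrix.linfty_opNorm_def]
  congr 1
  refine Finset.sup_congr rfl fun i _ => ?_
  refine Finset.sum_congr rfl fun j _ => ?_
  simp [Matrix.map_apply, Complex.nnnorm_real]

lemma map_exp_real (M : Matrix (Fin N) (Fin N) ℝ) (t : ℝ) :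
    (exp (t • M)).map Complex.ofReal = exp ((t : ℂ) • (M.map Complex.ofReal)) := by
  have hF : Continuous ((AlgHom.mapMatrix (m := Fin N) Complex.ofRealAm) :
      Matrix (Fin N) (Fin N) ℝ →ₐ[ℝ] Matrix (Fin N) (Fin N) ℂ) :=
    LinearMap.continuous_of_finiteDimensional
      (AlgHom.mapMatrix (m := Fin N) Complex.ofRealAm).toLinearMap
  have h1 : (exp (t • M)).map Complex.ofReal
      = (AlgHom.mapMatrix (m := Fin N) Complex.ofRealAm) (exp (t • M)) := by
    rw [AlgHom.mapMatrix_apply]; rfl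
  rw [h1]; refine (map_exp _ hF (t • M)).trans ?_; rw [_root_.map_smul]
  have h2 : (AlgHom.mapMatrix (m := Fin N) Complex.ofRealAm) M = M.map Complex.ofReal := by
    rw [AlgHom.mapMatrix_apply]; rfl
  rw [h2]
  have h3 : t • (M.map Complex.ofReal) = (t : ℂ) • (M.map Complex.ofReal) := by
    rw [← algebraMap_smul ℂ t (M.map Complex.ofReal)]
    norm_num
  rw [h3]; rfl

lemma poly_absorb {β : ℝ} (hβ : β < 0) :
    ∃ c : ℝ, 0 ≤ c ∧ ∀ t : ℝ, 0 ≤ t →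
      (1 + t) ^ N * Real.exp (β * t) ≤ c * Real.exp ((β / 2) * t) := by
  set ε : ℝ := min 1 (-β / (2 * (N + 1))) with hε
  have hε0 : 0 < ε := by
    refine lt_min one_pos (div_pos (by linarith) (by positivity))
  have hεN : (N : ℝ) * ε ≤ -β / 2 := by
    have h1 : ε ≤ -β / (2 * (N + 1)) := min_le_right _ _
    have h2 : (N : ℝ) ≥ 0 := Nat.cast_nonneg N
    have h3 : (N : ℝ) * ε ≤ (N : ℝ) * (-β / (2 * (N + 1))) :=
      mul_le_mul_of_nonneg_left h1 h2
    refine h3.trans ?_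
    rw [← mul_div_assoc, div_le_div_iff₀ (by positivity) (by norm_num : (0:ℝ) < 2)]
    nlinarith [Nat.cast_nonneg (α := ℝ) N]
  refine ⟨ε⁻¹ ^ N, by positivity, fun t ht => ?_⟩
  have h1t : 1 + t ≤ ε⁻¹ * Real.exp (ε * t) := by
    have h4 : ε * (1 + t) ≤ 1 + ε * t := by nlinarith [min_le_left (1:ℝ) (-β / (2 * (N + 1)))]
    have h5 : (1 : ℝ) + ε * t ≤ Real.exp (ε * t) := by
      have := Real.add_one_le_exp (ε * t); linarith
    rw [inv_mul_eq_div, le_div_iff₀ hε0]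
    nlinarith
  have hpow : (1 + t) ^ N ≤ ε⁻¹ ^ N * Real.exp ((N : ℝ) * (ε * t)) := by
    calc (1 + t) ^ N ≤ (ε⁻¹ * Real.exp (ε * t)) ^ N := by
          refine pow_le_pow_left₀ (by linarith) h1t N
      _ = ε⁻¹ ^ N * Real.exp (ε * t) ^ N := mul_pow _ _ _
      _ = ε⁻¹ ^ N * Real.exp ((N : ℝ) * (ε * t)) := by rw [← Real.exp_nat_mul]
  calc (1 + t) ^ N * Real.exp (β * t)
      ≤ (ε⁻¹ ^ N * Real.exp ((N : ℝ) * (ε * t))) * Real.exp (β * t) := by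
        refine mul_le_mul_of_nonneg_right hpow (Real.exp_nonneg _)
    _ = ε⁻¹ ^ N * Real.exp ((N : ℝ) * ε * t + β * t) := by
        rw [mul_assoc, ← Real.exp_add]; ring_nf
    _ ≤ ε⁻¹ ^ N * Real.exp ((β / 2) * t) := by
        refine mul_le_mul_of_nonneg_left ?_ (by positivity)
        rw [Real.exp_le_exp]
        nlinarith



lemma charpoly_transpose {R : Type*} [CommRing R] (M : Matrix (Fin N) (Fin N) R) :
    Mᵀ.charpoly = M.charpoly := by
  rw [Matrix.charpoly, Matrix.charpoly, ← Matrix.det_transpose (charmatrix Mᵀ)]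
  congr 1
  ext i j
  by_cases h : i = j
  · subst h
    simp [Matrix.transpose_apply, charmatrix_apply_eq]
  · rw [Matrix.transpose_apply, charmatrix_apply_ne _ _ _ (Ne.symm h), charmatrix_apply_ne _ _ _ h,
      Matrix.transpose_apply]

lemma exp_decay {M : Matrix (Fin N) (Fin N) ℝ}
    (hM : ∀ z : ℂ, ((M.map Complex.ofReal).charpoly).IsRoot z → z.re < 0) :
    ∃ c a : ℝ, 0 ≤ c ∧ 0 < a ∧ ∀ t : ℝ, 0 ≤ t →
      ‖exp (t • M)‖ ≤ c * Real.exp (-a * t) := by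
  obtain ⟨β, hβ0, hβ⟩ := exists_beta hM
  set Mc := M.map Complex.ofReal with hMc
  have hcol : ∀ j : Fin N, ∃ c : ℝ, 0 ≤ c ∧ ∀ t : ℝ, 0 ≤ t →
      ‖exp ((t : ℂ) • Mc) *ᵥ Pi.single j 1‖ ≤ c * ((1 + t) ^ N * Real.exp (β * t)) :=
    fun j => exp_mulVec_bound Mc hβ _
  choose cs hcs0 hcs using hcol
  obtain ⟨c₂, hc₂0, hc₂⟩ := poly_absorb (N := N) hβ0
  refine ⟨(∑ j, cs j) * c₂, -β / 2,
    mul_nonneg (Finset.sum_nonneg fun j _ => hcs0 j) hc₂0, by linarith, fun t ht => ?_⟩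
  have hs0 : 0 ≤ ∑ j, cs j := Finset.sum_nonneg fun j _ => hcs0 j
  calc ‖exp (t • M)‖ = ‖exp ((t : ℂ) • Mc)‖ := by
        rw [← norm_map_ofReal, map_exp_real]
    _ ≤ ∑ j, ‖exp ((t : ℂ) • Mc) *ᵥ Pi.single j 1‖ := norm_matrix_le_sum _
    _ ≤ ∑ j, cs j * ((1 + t) ^ N * Real.exp (β * t)) :=
        Finset.sum_le_sum fun j _ => hcs j t ht
    _ = (∑ j, cs j) * ((1 + t) ^ N * Real.exp (β * t)) := (Finset.sum_mul _ _ _).symm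
    _ ≤ (∑ j, cs j) * (c₂ * Real.exp ((β / 2) * t)) :=
        mul_le_mul_of_nonneg_left (hc₂ t ht) hs0
    _ = ((∑ j, cs j) * c₂) * Real.exp (-(-β / 2) * t) := by rw [mul_assoc]; ring_nf

noncomputable def lyapCLM (M : Matrix (Fin N) (Fin N) ℝ) :
    Matrix (Fin N) (Fin N) ℝ →L[ℝ] Matrix (Fin N) (Fin N) ℝ :=
  LinearMap.toContinuousLinearMap
    (LinearMap.mulLeft ℝ Mᵀ + LinearMap.mulRight ℝ M)

lemma lyapCLM_apply (M A : Matrix (Fin N) (Fin N) ℝ) :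
    lyapCLM M A = Mᵀ * A + A * M := rfl

noncomputable def quadCLM (x : Fin N → ℝ) :
    Matrix (Fin N) (Fin N) ℝ →L[ℝ] ℝ :=
  LinearMap.toContinuousLinearMap
    { toFun := fun A => x ⬝ᵥ (A *ᵥ x)
      map_add' := fun A B => by
        show x ⬝ᵥ ((A + B) *ᵥ x) = x ⬝ᵥ (A *ᵥ x) + x ⬝ᵥ (B *ᵥ x)
        rw [Matrix.add_mulVec, dotProduct_add]
      map_smul' := fun c A => by
        show x ⬝ᵥ ((c • A) *ᵥ x) = c • (x ⬝ᵥ (A *ᵥ x))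
        rw [Matrix.smul_mulVec, dotProduct_smul, smul_eq_mul] }

lemma quadCLM_apply (x : Fin N → ℝ) (A : Matrix (Fin N) (Fin N) ℝ) :
    quadCLM x A = x ⬝ᵥ (A *ᵥ x) := rfl

noncomputable def transCLM :
    Matrix (Fin N) (Fin N) ℝ →L[ℝ] Matrix (Fin N) (Fin N) ℝ :=
  LinearMap.toContinuousLinearMap
    { toFun := fun A => Aᵀ
      map_add' := fun A B => Matrix.transpose_add A B
      map_smul' := fun c A => Matrix.transpose_smul c A }

lemma transCLM_apply (A : Matrix (Fin N) (Fin N) ℝ) : (transCLM A) = Aᵀ := rfl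

lemma lyap_exists {M : Matrix (Fin N) (Fin N) ℝ}
    (hM : ∀ z : ℂ, ((M.map Complex.ofReal).charpoly).IsRoot z → z.re < 0) :
    ∃ P : Matrix (Fin N) (Fin N) ℝ, P.PosDef ∧ Mᵀ * P + P * M = -1 := by
  have hMT : ∀ z : ℂ, ((Mᵀ.map Complex.ofReal).charpoly).IsRoot z → z.re < 0 := by
    intro z hz
    refine hM z ?_
    have h1 : (Mᵀ.map Complex.ofReal) = (M.map Complex.ofReal)ᵀ := by
      ext i j; simp [Matrix.map_apply, Matrix.transpose_apply]
    rwa [h1, _root_.charpoly_transpose] at hz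
  obtain ⟨c, a, hc0, ha0, hdecay⟩ := exp_decay hM
  obtain ⟨c', a', hc'0, ha'0, hdecay'⟩ := exp_decay hMT
  set X : ℝ → Matrix (Fin N) (Fin N) ℝ := fun t => exp (t • M) with hX
  set G : ℝ → Matrix (Fin N) (Fin N) ℝ := fun t => exp (t • Mᵀ) with hG
  set F : ℝ → Matrix (Fin N) (Fin N) ℝ := fun t => G t * X t with hF
  have hGX : ∀ t : ℝ, G t = (X t)ᵀ := by
    intro t
    rw [hG, hX]
    simp only
    rw [← Matrix.transpose_smul, Matrix.exp_transpose]
  have hXd : ∀ t : ℝ, HasDerivAt X (X t * M) t := fun t => hasDerivAt_exp_smul_const M t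
  have hGd : ∀ t : ℝ, HasDerivAt G (Mᵀ * G t) t := fun t => hasDerivAt_exp_smul_const' Mᵀ t
  have hFd : ∀ t : ℝ, HasDerivAt F (Mᵀ * F t + F t * M) t := by
    intro t
    have h := (hGd t).mul (hXd t)
    have heq : Mᵀ * G t * X t + G t * (X t * M) = Mᵀ * F t + F t * M := by
      rw [hF]; simp only [mul_assoc]
    rwa [heq] at h
  have hFcont : Continuous F :=
    continuous_iff_continuousAt.2 fun t => (hFd t).differentiableAt.continuousAt
  have hFbound : ∀ t : ℝ, 0 ≤ t → ‖F t‖ ≤ (c' * c) * Real.exp (-(a + a') * t) := by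
    intro t ht
    calc ‖F t‖ ≤ ‖G t‖ * ‖X t‖ := norm_mul_le _ _
      _ ≤ (c' * Real.exp (-a' * t)) * (c * Real.exp (-a * t)) := by
          refine mul_le_mul (hdecay' t ht) (hdecay t ht) (norm_nonneg _) ?_
          positivity
      _ = (c' * c) * Real.exp (-(a + a') * t) := by
          rw [show -(a + a') * t = -a' * t + -a * t by ring, Real.exp_add]; ring
  have haa : (0 : ℝ) < a + a' := by linarith
  have hexpint : IntegrableOn (fun t => Real.exp (-(a + a') * t)) (Ioi (0 : ℝ)) :=
    exp_neg_integrableOn_Ioi 0 haa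
  have hFint : IntegrableOn F (Ioi (0 : ℝ)) := by
    refine Integrable.mono' (hexpint.const_mul (c' * c)) hFcont.aestronglyMeasurable.restrict ?_
    refine (ae_restrict_iff' measurableSet_Ioi).2 (ae_of_all _ fun t ht => ?_)
    exact hFbound t (le_of_lt ht)
  have hF'cont : Continuous (fun t => Mᵀ * F t + F t * M) :=
    ((continuous_const.mul hFcont).add (hFcont.mul continuous_const))
  have hF'int : IntegrableOn (fun t => Mᵀ * F t + F t * M) (Ioi (0 : ℝ)) := by
    refine Integrable.mono' (hexpint.const_mul ((‖Mᵀ‖ + ‖M‖) * (c' * c)))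
      hF'cont.aestronglyMeasurable.restrict ?_
    refine (ae_restrict_iff' measurableSet_Ioi).2 (ae_of_all _ fun t ht => ?_)
    calc ‖Mᵀ * F t + F t * M‖ ≤ ‖Mᵀ * F t‖ + ‖F t * M‖ := norm_add_le _ _
      _ ≤ ‖Mᵀ‖ * ‖F t‖ + ‖F t‖ * ‖M‖ := add_le_add (norm_mul_le _ _) (norm_mul_le _ _)
      _ = (‖Mᵀ‖ + ‖M‖) * ‖F t‖ := by ring
      _ ≤ (‖Mᵀ‖ + ‖M‖) * ((c' * c) * Real.exp (-(a + a') * t)) := by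
          refine mul_le_mul_of_nonneg_left (hFbound t (le_of_lt ht)) (by positivity)
      _ = (‖Mᵀ‖ + ‖M‖) * (c' * c) * Real.exp (-(a + a') * t) := by ring
  have hFtend : Tendsto F atTop (𝓝 0) := by
    have h1 : Tendsto (fun t : ℝ => (c' * c) * Real.exp (-(a + a') * t)) atTop (𝓝 0) := by
      have h2 : Tendsto (fun t : ℝ => -(a + a') * t) atTop atBot :=
        Tendsto.const_mul_atTop_of_neg (by linarith) tendsto_id
      have h3 := Real.tendsto_exp_atBot.comp h2
      have h4 := h3.const_mul (c' * c)
      simpa using h4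
    refine squeeze_zero_norm' ?_ h1
    filter_upwards [eventually_ge_atTop (0 : ℝ)] with t ht
    exact hFbound t ht
  have hF0 : F 0 = 1 := by
    rw [hF, hG, hX]
    simp only [zero_smul, exp_zero, mul_one]
  have hFTC : ∫ t in Ioi (0 : ℝ), (Mᵀ * F t + F t * M) = 0 - F 0 := by
    refine integral_Ioi_of_hasDerivAt_of_tendsto
      (hFcont.continuousAt.continuousWithinAt) (fun t _ => hFd t) hF'int hFtend
  rw [hF0, zero_sub] at hFTC
  set P : Matrix (Fin N) (Fin N) ℝ := ∫ t in Ioi (0 : ℝ), F t with hP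
  have hlyap : Mᵀ * P + P * M = -1 := by
    have h1 : ∫ t in Ioi (0 : ℝ), (lyapCLM M) (F t) = (lyapCLM M) P :=
      ContinuousLinearMap.integral_comp_comm _ hFint
    have h2 : (fun t => (lyapCLM M) (F t)) = fun t => Mᵀ * F t + F t * M := by
      funext t; rw [lyapCLM_apply]
    rw [h2] at h1
    rw [← lyapCLM_apply, ← h1, hFTC]
  have hFsymm : ∀ t : ℝ, (F t)ᵀ = F t := by
    intro t
    rw [hF]
    simp only
    rw [hGX, Matrix.transpose_mul, Matrix.transpose_transpose]
  have hPsymm : Pᵀ = P := by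
    have h1 : ∫ t in Ioi (0 : ℝ), (transCLM (N := N)) (F t) = transCLM P :=
      ContinuousLinearMap.integral_comp_comm _ hFint
    have h2 : (fun t => (transCLM (N := N)) (F t)) = F := by
      funext t; rw [transCLM_apply, hFsymm]
    rw [h2] at h1
    rw [← transCLM_apply, ← h1]
  have hPposdef : P.PosDef := by
    refine Matrix.PosDef.of_dotProduct_mulVec_pos ?_ ?_
    · rw [Matrix.IsHermitian, Matrix.conjTranspose_eq_transpose_of_trivial, hPsymm]
    · intro x hx
      rw [star_trivial]
      have hgpos : ∀ t : ℝ, 0 < x ⬝ᵥ (F t *ᵥ x) := by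
        intro t
        have hXx : X t *ᵥ x ≠ 0 := by
          intro h0
          have hunit : IsUnit (X t) := Matrix.isUnit_exp (t • M)
          have hdet : IsUnit (X t).det := (Matrix.isUnit_iff_isUnit_det _).1 hunit
          have : x = 0 := by
            have h2 : (X t)⁻¹ * X t = 1 := Matrix.nonsing_inv_mul _ hdet
            calc x = (1 : Matrix (Fin N) (Fin N) ℝ) *ᵥ x := (Matrix.one_mulVec x).symm
              _ = ((X t)⁻¹ * X t) *ᵥ x := by rw [h2]
              _ = (X t)⁻¹ *ᵥ (X t *ᵥ x) := (Matrix.mulVec_mulVec _ _ _).symm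
              _ = 0 := by rw [h0, Matrix.mulVec_zero]
          exact hx this
        have hquad : x ⬝ᵥ (F t *ᵥ x) = (X t *ᵥ x) ⬝ᵥ (X t *ᵥ x) := by
          rw [hF]
          simp only
          rw [hGX, ← Matrix.mulVec_mulVec, Matrix.dotProduct_mulVec, Matrix.vecMul_transpose]
        rw [hquad]
        obtain ⟨i, hi⟩ := Function.ne_iff.1 hXx
        refine Finset.sum_pos' (fun j _ => mul_self_nonneg _) ⟨i, Finset.mem_univ i, ?_⟩
        exact mul_self_pos.2 hi
      have hquadP : x ⬝ᵥ (P *ᵥ x) = ∫ t in Ioi (0 : ℝ), x ⬝ᵥ (F t *ᵥ x) := by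
        have h1 : ∫ t in Ioi (0 : ℝ), (quadCLM x) (F t) = (quadCLM x) P :=
          ContinuousLinearMap.integral_comp_comm _ hFint
        rw [← quadCLM_apply, ← h1]
        rfl
      rw [hquadP]
      have hgint : IntegrableOn (fun t => x ⬝ᵥ (F t *ᵥ x)) (Ioi (0 : ℝ)) := by
        have := ContinuousLinearMap.integrable_comp (quadCLM x) hFint
        exact this
      have hmono : ∫ t in Ioc (0 : ℝ) 1, x ⬝ᵥ (F t *ᵥ x)
          ≤ ∫ t in Ioi (0 : ℝ), x ⬝ᵥ (F t *ᵥ x) := by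
        refine setIntegral_mono_set hgint ?_ ?_
        · exact ae_of_all _ fun t => le_of_lt (hgpos t)
        · exact HasSubset.Subset.eventuallyLE Ioc_subset_Ioi_self
      refine lt_of_lt_of_le ?_ hmono
      have hgcont : Continuous (fun t => x ⬝ᵥ (F t *ᵥ x)) := (quadCLM x).continuous.comp hFcont
      have h01 : (0 : ℝ) < 1 := one_pos
      have := intervalIntegral.intervalIntegral_pos_of_pos_on
        (f := fun t => x ⬝ᵥ (F t *ᵥ x)) (a := 0) (b := 1)
        (hgcont.intervalIntegrable 0 1) (fun t _ => hgpos t) h01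
      rwa [intervalIntegral.integral_of_le (le_of_lt h01)] at this
  exact ⟨P, hPposdef, hlyap⟩

lemma re_quad_eq (A : Matrix (Fin N) (Fin N) ℝ) (x : Fin N → ℂ) :
    (star x ⬝ᵥ (A.map Complex.ofReal) *ᵥ x).re
      = (fun i => (x i).re) ⬝ᵥ A *ᵥ (fun i => (x i).re)
        + (fun i => (x i).im) ⬝ᵥ A *ᵥ (fun i => (x i).im) := by
  simp only [dotProduct, Matrix.mulVec, Matrix.map_apply, Pi.star_apply, Complex.re_sum,
    Finset.mul_sum, Finset.sum_mul, ← Finset.sum_add_distrib]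
  refine Finset.sum_congr rfl fun i _ => Finset.sum_congr rfl fun j _ => ?_
  simp [Complex.mul_re, Complex.mul_im]; try ring

lemma re_quad_pos {A : Matrix (Fin N) (Fin N) ℝ} (hA : A.PosDef) {x : Fin N → ℂ}
    (hx : x ≠ 0) : 0 < (star x ⬝ᵥ (A.map Complex.ofReal) *ᵥ x).re := by
  rw [re_quad_eq]
  set xr : Fin N → ℝ := fun i => (x i).re
  set xi : Fin N → ℝ := fun i => (x i).im
  have h : xr ≠ 0 ∨ xi ≠ 0 := by
    by_contra h
    push_neg at h
    apply hx
    funext i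
    have h1 := congrFun h.1 i
    have h2 := congrFun h.2 i
    simp [xr, xi] at h1 h2
    exact Complex.ext h1 h2
  rcases h with h | h
  · have h1 := hA.dotProduct_mulVec_pos h
    have h2 := hA.posSemidef.dotProduct_mulVec_nonneg xi
    simp only [star_trivial] at h1 h2
    linarith
  · have h1 := hA.posSemidef.dotProduct_mulVec_nonneg xr
    have h2 := hA.dotProduct_mulVec_pos h
    simp only [star_trivial] at h1 h2
    linarith


lemma map_mulVec_star (M : Matrix (Fin N) (Fin N) ℝ) (v : Fin N → ℂ) :
    (M.map Complex.ofReal) *ᵥ (star v) = star ((M.map Complex.ofReal) *ᵥ v) := by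
  funext i
  simp only [Matrix.mulVec, dotProduct, Pi.star_apply, Matrix.map_apply, star_sum]
  refine Finset.sum_congr rfl fun j _ => ?_
  simp [RCLike.star_def, mul_comm]

lemma lyap_suff {M P : Matrix (Fin N) (Fin N) ℝ} (hP : P.PosDef)
    (hQ : (-(Mᵀ * P) - P * M).PosDef) :
    ∀ z : ℂ, ((M.map Complex.ofReal).charpoly).IsRoot z → z.re < 0 := by
  intro z hz
  obtain ⟨v, hv0, hv⟩ := (charpoly_isRoot_iff _ z).1 hz
  set Mc := M.map Complex.ofReal with hMc
  set Pc := P.map Complex.ofReal with hPc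
  have hQc : ((-(Mᵀ * P) - P * M).map Complex.ofReal) = -(Mcᵀ * Pc) - Pc * Mc := by
    funext i j
    simp only [Matrix.map_apply, Matrix.sub_apply, Matrix.neg_apply, Matrix.mul_apply,
      Matrix.transpose_apply, hMc, hPc]
    push_cast
    ring
  set S := star v ⬝ᵥ Pc *ᵥ v with hS
  have hSre : 0 < S.re := re_quad_pos hP hv0
  have hXre : 0 < (star v ⬝ᵥ ((-(Mᵀ * P) - P * M).map Complex.ofReal) *ᵥ v).re :=
    re_quad_pos hQ hv0
  have key : star v ⬝ᵥ ((-(Mᵀ * P) - P * M).map Complex.ofReal) *ᵥ v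
      = -((z + (starRingEnd ℂ) z) * S) := by
    rw [hQc]
    have e1 : (Mcᵀ * Pc) *ᵥ v = Mcᵀ *ᵥ (Pc *ᵥ v) := (Matrix.mulVec_mulVec _ _ _).symm
    have e2 : (Pc * Mc) *ᵥ v = Pc *ᵥ (Mc *ᵥ v) := (Matrix.mulVec_mulVec _ _ _).symm
    rw [Matrix.sub_mulVec, Matrix.neg_mulVec, e1, e2, hv, Matrix.mulVec_smul,
      dotProduct_sub, dotProduct_neg, Matrix.dotProduct_mulVec _ Mcᵀ,
      Matrix.vecMul_transpose, map_mulVec_star, hv]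
    have e3 : star (z • v) = (starRingEnd ℂ) z • star v := by
      funext i; simp [RCLike.star_def]
    rw [e3, smul_dotProduct, dotProduct_smul, ← hS]
    have : (dotProduct (starRingEnd ℂ z • star v) (Pc *ᵥ v)) = (starRingEnd ℂ) z * S := by
      rw [smul_dotProduct, ← hS]; rfl
    ring_nf
  rw [key] at hXre
  rw [Complex.add_conj] at hXre
  rw [show -((↑(2 * z.re) : ℂ) * S) = (↑(-(2 * z.re)) : ℂ) * S by push_cast; ring] at hXre
  rw [Complex.re_ofReal_mul] at hXre
  nlinarith

end LyapunovAux

/-- Luenberger observer design LMI: the error dynamics matrix `A − LC` is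
Hurwitz iff there are `P ≻ 0` (symmetric) and `K` with
`−AᵀP − PA + CᵀKᵀ + KC ≻ 0` and `L = P⁻¹K`. -/
theorem stmt9 {n m : ℕ}
    (A : Matrix (Fin n) (Fin n) ℝ) (C : Matrix (Fin m) (Fin n) ℝ)
    (L : Matrix (Fin n) (Fin m) ℝ) :
    IsHurwitz (A - L * C) ↔
      ∃ (P : Matrix (Fin n) (Fin n) ℝ) (K : Matrix (Fin n) (Fin m) ℝ),
        P.PosDef ∧ (-(Aᵀ * P) - P * A + Cᵀ * Kᵀ + K * C).PosDef ∧ L = P⁻¹ * K := by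
  constructor
  · intro h
    obtain ⟨P, hP, hlyap⟩ := lyap_exists (fun z hz => h z hz)
    have hPt : Pᵀ = P := by
      have h1 : Pᴴ = P := hP.1
      rwa [Matrix.conjTranspose_eq_transpose_of_trivial] at h1
    have hdet : IsUnit P.det := (Matrix.isUnit_iff_isUnit_det _).1 hP.isUnit
    refine ⟨P, P * L, hP, ?_, ?_⟩
    · have heq : -(Aᵀ * P) - P * A + Cᵀ * (P * L)ᵀ + (P * L) * C
          = -((A - L * C)ᵀ * P + P * (A - L * C)) := by
        rw [Matrix.transpose_mul, hPt, Matrix.transpose_sub, Matrix.transpose_mul,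
          Matrix.sub_mul, Matrix.mul_sub, Matrix.mul_assoc Cᵀ Lᵀ P, ← Matrix.mul_assoc P L C]
        abel
      rw [heq, hlyap, neg_neg]
      exact Matrix.PosDef.one
    · have h2 : P⁻¹ * (P * L) = L := by
        rw [← Matrix.mul_assoc, Matrix.nonsing_inv_mul _ hdet, Matrix.one_mul]
      exact h2.symm
  · rintro ⟨P, K, hP, hQ, hLK⟩
    have hPt : Pᵀ = P := by
      have h1 : Pᴴ = P := hP.1
      rwa [Matrix.conjTranspose_eq_transpose_of_trivial] at h1
    have hdet : IsUnit P.det := (Matrix.isUnit_iff_isUnit_det _).1 hP.isUnit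
    have hK : K = P * L := by
      rw [hLK, ← Matrix.mul_assoc, Matrix.mul_nonsing_inv _ hdet, Matrix.one_mul]
    have heq : -(Aᵀ * P) - P * A + Cᵀ * Kᵀ + K * C
        = -((A - L * C)ᵀ * P) - P * (A - L * C) := by
      rw [hK, Matrix.transpose_mul, hPt, Matrix.transpose_sub, Matrix.transpose_mul,
        Matrix.sub_mul, Matrix.mul_sub, Matrix.mul_assoc Cᵀ Lᵀ P, ← Matrix.mul_assoc P L C]
      abel
    rw [heq] at hQ
    intro z hz
    exact lyap_suff hP hQ z hz
end

section
/- Let P ∈ ℝ^{2n×2n} be symmetric and invertible, written in n×n blocks as P = [[X, M], [Mᵀ, Z]], and write its inverse in n×n blocks as P⁻¹ = [[Y, N], [Nᵀ, W]]. If M is invertible, then P is positive definite if and only if the 2×2 block matrix [[Y, I], [I, X]] is positive definite. -/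
open Matrix

lemma posDef_conj_aux {m : Type*} [Fintype m] [DecidableEq m]
    {A U : Matrix m m ℝ} (hU : IsUnit U) (hA : A.PosDef) : (Uᵀ * A * U).PosDef := by
  rw [Matrix.posDef_iff_dotProduct_mulVec]
  constructor
  · have hUH : Uᴴ = Uᵀ := by ext i j; simp [Matrix.conjTranspose_apply]
    exact hUH ▸ Matrix.isHermitian_conjTranspose_mul_mul U hA.isHermitian
  · intro x hx
    have hUx : U *ᵥ x ≠ 0 := by
      intro h
      exact hx (Matrix.mulVec_injective_iff_isUnit.2 hU (h.trans (Matrix.mulVec_zero U).symm))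
    have key : star x ⬝ᵥ (Uᵀ * A * U) *ᵥ x = star (U *ᵥ x) ⬝ᵥ A *ᵥ (U *ᵥ x) := by
      simp only [star_trivial, ← Matrix.mulVec_mulVec, Matrix.dotProduct_mulVec,
        Matrix.vecMul_transpose]
    rw [key]
    exact hA.dotProduct_mulVec_pos hUx

lemma posDef_conj_iff {m : Type*} [Fintype m] [DecidableEq m]
    {A U : Matrix m m ℝ} (hU : IsUnit U) : (Uᵀ * A * U).PosDef ↔ A.PosDef := by
  have hdet := (Matrix.isUnit_iff_isUnit_det U).mp hU
  constructor
  · intro h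
    have hU' : IsUnit U⁻¹ := (Matrix.isUnit_nonsing_inv_iff).mpr hU
    have h2 := posDef_conj_aux hU' h
    have h1 : (U⁻¹)ᵀ * Uᵀ = 1 := by
      rw [← Matrix.transpose_mul, Matrix.mul_nonsing_inv U hdet, Matrix.transpose_one]
    have hid : (U⁻¹)ᵀ * (Uᵀ * A * U) * U⁻¹ = A := by
      calc (U⁻¹)ᵀ * (Uᵀ * A * U) * U⁻¹ = ((U⁻¹)ᵀ * Uᵀ) * (A * (U * U⁻¹)) := by
            simp only [Matrix.mul_assoc]
        _ = A := by rw [h1, Matrix.mul_nonsing_inv U hdet, Matrix.mul_one, Matrix.one_mul]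
    rwa [hid] at h2
  · exact posDef_conj_aux hU

/-- Change-of-variables property for dynamic output feedback synthesis:
if `P = [[X, M], [Mᵀ, Z]]` is symmetric and invertible with `M` invertible,
and `P⁻¹ = [[Y, N], [Nᵀ, W]]`, then `P ≻ 0` iff `[[Y, I], [I, X]] ≻ 0`. -/
theorem stmt11 {n : ℕ}
    (P : Matrix (Fin n ⊕ Fin n) (Fin n ⊕ Fin n) ℝ)
    (hsym : Pᵀ = P) (hinv : IsUnit P) (hM : IsUnit (P.toBlocks₁₂)) :
    P.PosDef ↔
      (Matrix.fromBlocks ((P⁻¹).toBlocks₁₁) (1 : Matrix (Fin n) (Fin n) ℝ)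
        (1 : Matrix (Fin n) (Fin n) ℝ) (P.toBlocks₁₁)).PosDef := by
  set X := P.toBlocks₁₁ with hX
  set M := P.toBlocks₁₂ with hMdef
  set Z := P.toBlocks₂₂ with hZ
  set Y := (P⁻¹).toBlocks₁₁ with hY
  set N := (P⁻¹).toBlocks₁₂ with hN
  set C := (P⁻¹).toBlocks₂₁ with hC
  set W := (P⁻¹).toBlocks₂₂ with hW
  have hdet : IsUnit P.det := (Matrix.isUnit_iff_isUnit_det P).mp hinv
  have hMT : IsUnit Mᵀ := by
    rw [Matrix.isUnit_iff_isUnit_det, Matrix.det_transpose,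
      ← Matrix.isUnit_iff_isUnit_det]; exact hM
  have hMTdet : IsUnit Mᵀ.det := (Matrix.isUnit_iff_isUnit_det Mᵀ).mp hMT
  -- P in block form
  have h21 : P.toBlocks₂₁ = Mᵀ := by
    ext i j
    have := congrFun (congrFun hsym (Sum.inl j)) (Sum.inr i)
    simpa [Matrix.toBlocks₂₁, Matrix.toBlocks₁₂, hMdef, Matrix.transpose_apply] using this
  have hP : P = fromBlocks X M Mᵀ Z := by
    rw [← Matrix.fromBlocks_toBlocks P, h21]
  have hQ : P⁻¹ = fromBlocks Y N C W := (Matrix.fromBlocks_toBlocks _).symm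
  have hXsym : Xᵀ = X := by
    ext i j
    have := congrFun (congrFun hsym (Sum.inl j)) (Sum.inl i)
    simpa [hX, Matrix.toBlocks₁₁, Matrix.transpose_apply] using this.symm
  -- block identities from P⁻¹ * P = 1 and P * P⁻¹ = 1
  have hQP : P⁻¹ * P = 1 := Matrix.nonsing_inv_mul P hdet
  have hPQ : P * P⁻¹ = 1 := Matrix.mul_nonsing_inv P hdet
  have hQPb := hQP
  have hPQb := hPQ
  rw [hQ, hP, Matrix.fromBlocks_multiply, ← Matrix.fromBlocks_one] at hQPb hPQb
  obtain ⟨hYX, -, hCX, -⟩ := Matrix.fromBlocks_inj.mp hQPb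
  obtain ⟨hXY, -, -, -⟩ := Matrix.fromBlocks_inj.mp hPQb
  -- the congruence matrix
  set Px : Matrix (Fin n ⊕ Fin n) (Fin n ⊕ Fin n) ℝ := fromBlocks 1 X 0 Mᵀ with hPx
  have hPxUnit : IsUnit Px := by
    refine (Matrix.isUnit_iff_isUnit_det _).mpr (Matrix.isUnit_det_of_right_inverse (B := fromBlocks 1 (-(X * (Mᵀ)⁻¹)) 0 (Mᵀ)⁻¹) ?_)
    rw [hPx, Matrix.fromBlocks_multiply]
    rw [← Matrix.fromBlocks_one]
    exact Matrix.fromBlocks_inj.mpr ⟨by simp, by simp [Matrix.mul_nonsing_inv Mᵀ hMTdet,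
      Matrix.mul_assoc], by simp, by simp [Matrix.mul_nonsing_inv Mᵀ hMTdet]⟩
  set U : Matrix (Fin n ⊕ Fin n) (Fin n ⊕ Fin n) ℝ := P⁻¹ * Px with hU
  have hUunit : IsUnit U := ((Matrix.isUnit_nonsing_inv_iff).mpr hinv).mul hPxUnit
  have hQsym : (P⁻¹)ᵀ = P⁻¹ := by rw [Matrix.transpose_nonsing_inv, hsym]
  have key : Uᵀ * P * U = fromBlocks Y 1 1 X := by
    have h1 : P⁻¹ * Px = fromBlocks Y 1 C 0 := by
      rw [hQ, hPx, Matrix.fromBlocks_multiply]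
      exact Matrix.fromBlocks_inj.mpr ⟨by simp, by simpa using hYX, by simp, by simpa using hCX⟩
    calc Uᵀ * P * U = Pxᵀ * ((P⁻¹)ᵀ * (P * (P⁻¹ * Px))) := by
          rw [hU, Matrix.transpose_mul]
          simp only [Matrix.mul_assoc]
      _ = Pxᵀ * (P⁻¹ * Px) := by
          rw [hQsym, ← Matrix.mul_assoc P, hPQ, Matrix.one_mul]
      _ = fromBlocks Y 1 1 X := by
          rw [h1, hPx, Matrix.fromBlocks_transpose, Matrix.fromBlocks_multiply]
          exact Matrix.fromBlocks_inj.mpr ⟨by simp, by simp,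
            by rw [hXsym]; simpa using hXY, by simp [hXsym]⟩
  rw [← key]
  exact (posDef_conj_iff hUunit).symm
end

section
/- Let A ∈ ℝ^{n×n}, B ∈ ℝ^{n×p}, C ∈ ℝ^{m×n}. The following are equivalent: (i) there exist matrices A_c ∈ ℝ^{n×n}, B_c ∈ ℝ^{n×m}, C_c ∈ ℝ^{p×n}, D_c ∈ ℝ^{p×m} and a symmetric positive definite P ∈ ℝ^{2n×2n} such that −ĀᵀP − PĀ is positive definite, where Ā = [[A + B D_c C, B C_c], [B_c C, A_c]]; (ii) there exist symmetric positive definite X, Y ∈ ℝ^{n×n} and matrices A_n ∈ ℝ^{n×n}, B_n ∈ ℝ^{n×m}, C_n ∈ ℝ^{p×n}, D_n ∈ ℝ^{p×m} such that [[Y, I], [I, X]] is positive definite and [[−(AY + BC_n) − (AY + BC_n)ᵀ, −A − B D_n C − A_nᵀ], [⋆, −(XA + B_n C) − (XA + B_n C)ᵀ]] is positive definite. -/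
open Matrix

set_option linter.unusedSectionVars false

section Helpers

variable {ι : Type*} [Fintype ι] [DecidableEq ι]

lemma herm_transpose {M : Matrix ι ι ℝ} (h : M.IsHermitian) : Mᵀ = M := by
  have := h.eq
  rwa [Matrix.conjTranspose_eq_transpose_of_trivial] at this

lemma herm_of_transpose {M : Matrix ι ι ℝ} (h : Mᵀ = M) : M.IsHermitian := by
  rwa [Matrix.IsHermitian, Matrix.conjTranspose_eq_transpose_of_trivial]

lemma posdef_conj {M : Matrix ι ι ℝ} (hM : M.PosDef) (E : Matrix ι ι ℝ) (hE : IsUnit E) :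
    (Eᵀ * M * E).PosDef := by
  refine Matrix.PosDef.of_dotProduct_mulVec_pos ?_ ?_
  · apply herm_of_transpose
    simp [Matrix.transpose_mul, Matrix.mul_assoc, herm_transpose hM.1]
  · intro x hx
    have hinj : Function.Injective (E.mulVec) := Matrix.mulVec_injective_iff_isUnit.mpr hE
    have hEx : E *ᵥ x ≠ 0 := by
      intro h0
      exact hx (hinj (by simpa using h0))
    have := hM.dotProduct_mulVec_pos hEx
    simpa [star_trivial, ← Matrix.mulVec_mulVec, Matrix.dotProduct_mulVec,
      Matrix.vecMul_transpose] using this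

lemma posdef_conj_iff {M : Matrix ι ι ℝ} (E : Matrix ι ι ℝ) (hE : IsUnit E) :
    (Eᵀ * M * E).PosDef ↔ M.PosDef := by
  refine ⟨fun h => ?_, fun h => posdef_conj h E hE⟩
  have hdet : IsUnit E.det := (Matrix.isUnit_iff_isUnit_det E).mp hE
  have h2 := posdef_conj h E⁻¹ (Matrix.isUnit_nonsing_inv_iff.mpr hE)
  have : (E⁻¹)ᵀ * (Eᵀ * M * E) * E⁻¹ = M := by
    rw [Matrix.transpose_nonsing_inv]
    calc Eᵀ⁻¹ * (Eᵀ * M * E) * E⁻¹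
        = (Eᵀ⁻¹ * Eᵀ) * M * (E * E⁻¹) := by
          simp only [Matrix.mul_assoc]
      _ = M := by
          rw [Matrix.nonsing_inv_mul _ (by simpa using hdet),
            Matrix.mul_nonsing_inv _ hdet, Matrix.one_mul, Matrix.mul_one]
  rwa [this] at h2

variable {κ : Type*} [Fintype κ] [DecidableEq κ]

lemma posdef_toBlocks₁₁ {P : Matrix (ι ⊕ κ) (ι ⊕ κ) ℝ} (hP : P.PosDef) :
    P.toBlocks₁₁.PosDef := by
  refine Matrix.PosDef.of_dotProduct_mulVec_pos ?_ ?_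
  · apply herm_of_transpose
    have := herm_transpose hP.1
    ext i j
    exact congrFun (congrFun this (.inl i)) (.inl j)
  · intro x hx
    have hz : Sum.elim x (0 : κ → ℝ) ≠ 0 := by
      intro h0
      exact hx (funext fun i => congrFun h0 (.inl i))
    have := hP.dotProduct_mulVec_pos hz
    rw [← Matrix.fromBlocks_toBlocks P, Matrix.fromBlocks_mulVec] at this
    simpa [star_trivial, sumElim_dotProduct_sumElim] using this

lemma posdef_toBlocks₂₂ {P : Matrix (ι ⊕ κ) (ι ⊕ κ) ℝ} (hP : P.PosDef) :
    P.toBlocks₂₂.PosDef := by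
  refine Matrix.PosDef.of_dotProduct_mulVec_pos ?_ ?_
  · apply herm_of_transpose
    have := herm_transpose hP.1
    ext i j
    exact congrFun (congrFun this (.inr i)) (.inr j)
  · intro x hx
    have hz : Sum.elim (0 : ι → ℝ) x ≠ 0 := by
      intro h0
      exact hx (funext fun i => congrFun h0 (.inr i))
    have := hP.dotProduct_mulVec_pos hz
    rw [← Matrix.fromBlocks_toBlocks P, Matrix.fromBlocks_mulVec] at this
    simpa [star_trivial, sumElim_dotProduct_sumElim] using this

lemma isUnit_pi1 (Y Wt : Matrix ι ι ℝ) (hW : IsUnit Wt) :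
    IsUnit (Matrix.fromBlocks Y 1 Wt (0 : Matrix ι ι ℝ)) := by
  have hWd : IsUnit Wt.det := (Matrix.isUnit_iff_isUnit_det Wt).mp hW
  have h1 : Matrix.fromBlocks Y 1 Wt (0 : Matrix ι ι ℝ) *
      Matrix.fromBlocks 0 Wt⁻¹ 1 (-(Y * Wt⁻¹)) = (1 : Matrix (ι ⊕ ι) (ι ⊕ ι) ℝ) := by
    rw [Matrix.fromBlocks_multiply, ← @Matrix.fromBlocks_one ι ι]
    congr 1 <;> simp [Matrix.mul_nonsing_inv _ hWd, Matrix.mul_assoc]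
  exact ⟨⟨_, _, h1, mul_eq_one_comm.mp h1⟩, rfl⟩

lemma central {Abar P Pi1 Pi2 : Matrix ι ι ℝ} (hsym : Pᵀ = P) (h : P * Pi1 = Pi2) :
    Pi1ᵀ * (-(Abarᵀ * P) - P * Abar) * Pi1
      = -(Pi2ᵀ * Abar * Pi1)ᵀ - Pi2ᵀ * Abar * Pi1 := by
  subst h
  simp only [Matrix.transpose_mul, Matrix.transpose_transpose, hsym,
    Matrix.mul_sub, Matrix.sub_mul, Matrix.mul_neg, Matrix.neg_mul, Matrix.mul_assoc]

lemma lmi2_eq {np mp : Type*} (A X Y An : Matrix ι ι ℝ) (B : Matrix ι np ℝ) (C : Matrix mp ι ℝ)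
    [Fintype np] [Fintype mp]
    (Bn : Matrix ι mp ℝ) (Cn : Matrix np ι ℝ) (Dn : Matrix np mp ℝ) :
    (Matrix.fromBlocks
        (-(A * Y + B * Cn) - (A * Y + B * Cn)ᵀ) (-A - B * Dn * C - Anᵀ)
        (-A - B * Dn * C - Anᵀ)ᵀ (-(X * A + Bn * C) - (X * A + Bn * C)ᵀ))
      = -(Matrix.fromBlocks (A * Y + B * Cn) (A + B * Dn * C) An (X * A + Bn * C))ᵀ
        - Matrix.fromBlocks (A * Y + B * Cn) (A + B * Dn * C) An (X * A + Bn * C) := by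
  ext i j
  rcases i with i | i <;> rcases j with j | j <;>
    simp [Matrix.fromBlocks, Matrix.sub_apply, Matrix.neg_apply, Matrix.transpose_apply,
      Matrix.add_apply, Matrix.mul_apply, mul_comm] <;> ring


variable {ι : Type*} [Fintype ι] [DecidableEq ι]

lemma cont_quad (M : Matrix ι ι ℝ) : Continuous fun x : ι → ℝ => x ⬝ᵥ M *ᵥ x := by
  simp only [dotProduct, Matrix.mulVec]
  exact continuous_finset_sum _ fun i _ => (continuous_apply i).mul
    (continuous_finset_sum _ fun j _ => continuous_const.mul (continuous_apply j))

lemma posdef_perturb (M N : Matrix ι ι ℝ) (hM : M.PosDef) (hN : N.IsHermitian) :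
    ∃ δ : ℝ, 0 < δ ∧ ∀ ε : ℝ, |ε| < δ → (M + ε • N).PosDef := by
  have hherm : ∀ ε : ℝ, (M + ε • N).IsHermitian := fun ε => by
    have : (ε • N).IsHermitian := by
      have hNT : Nᵀ = N := by
        have := hN.eq; rwa [Matrix.conjTranspose_eq_transpose_of_trivial] at this
      rw [Matrix.IsHermitian, Matrix.conjTranspose_smul]
      simp [hNT]
    exact hM.1.add this
  rcases isEmpty_or_nonempty ι with hι | hι
  · exact ⟨1, one_pos, fun ε _ => Matrix.PosDef.of_dotProduct_mulVec_pos (hherm ε) fun x hx =>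
      absurd (funext fun i => (IsEmpty.false i).elim) hx⟩
  · have hS : IsCompact (Metric.sphere (0 : ι → ℝ) 1) := isCompact_sphere 0 1
    have hSne : (Metric.sphere (0 : ι → ℝ) 1).Nonempty := by
      rw [NormedSpace.sphere_nonempty]; norm_num
    obtain ⟨x₀, hx₀S, hx₀min⟩ := hS.exists_isMinOn hSne (cont_quad M).continuousOn
    obtain ⟨x₁, hx₁S, hx₁max⟩ := hS.exists_isMaxOn hSne
      ((cont_quad N).abs.continuousOn)
    set c := x₀ ⬝ᵥ M *ᵥ x₀ with hc
    set K := |x₁ ⬝ᵥ N *ᵥ x₁| with hK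
    have hcpos : 0 < c := by
      refine lt_of_lt_of_eq (hM.dotProduct_mulVec_pos (x := x₀) ?_) (by simp [star_trivial, hc])
      intro h0
      rw [mem_sphere_iff_norm, h0] at hx₀S
      simp at hx₀S
    have hKnn : 0 ≤ K := abs_nonneg _
    refine ⟨c / (K + 1), div_pos hcpos (by linarith), fun ε hε => ?_⟩
    refine Matrix.PosDef.of_dotProduct_mulVec_pos (hherm ε) fun x hx => ?_
    have hxn : 0 < ‖x‖ := norm_pos_iff.mpr hx
    set u : ι → ℝ := ‖x‖⁻¹ • x with hu
    have huS : u ∈ Metric.sphere (0 : ι → ℝ) 1 := by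
      rw [mem_sphere_iff_norm, sub_zero, hu, norm_smul, norm_inv, norm_norm]
      field_simp
    have hdecomp : x = ‖x‖ • u := by
      rw [hu, smul_smul, mul_inv_cancel₀ hxn.ne', one_smul]
    have key : ∀ Q : Matrix ι ι ℝ, x ⬝ᵥ Q *ᵥ x = ‖x‖ ^ 2 * (u ⬝ᵥ Q *ᵥ u) := by
      intro Q
      conv_lhs => rw [hdecomp]
      rw [Matrix.mulVec_smul, smul_dotProduct, dotProduct_smul]
      simp [smul_eq_mul]; ring
    have hMu : c ≤ u ⬝ᵥ M *ᵥ u := hx₀min huS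
    have hNu : |u ⬝ᵥ N *ᵥ u| ≤ K := hx₁max huS
    have hcross : -(|ε| * K) ≤ ε * (u ⬝ᵥ N *ᵥ u) := by
      have h1 : |ε * (u ⬝ᵥ N *ᵥ u)| ≤ |ε| * K := by
        rw [abs_mul]
        exact mul_le_mul_of_nonneg_left hNu (abs_nonneg ε)
      linarith [neg_abs_le (ε * (u ⬝ᵥ N *ᵥ u))]
    have hεK : |ε| * K < c := by
      calc |ε| * K ≤ (c / (K + 1)) * K :=
            mul_le_mul_of_nonneg_right (le_of_lt hε) hKnn
        _ < c := by
            rw [div_mul_eq_mul_div, div_lt_iff₀ (by linarith)]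
            nlinarith
    have hpos : 0 < u ⬝ᵥ (M + ε • N) *ᵥ u := by
      rw [Matrix.add_mulVec, dotProduct_add, Matrix.smul_mulVec,
        dotProduct_smul, smul_eq_mul]
      linarith
    have := key (M + ε • N)
    simp only [star_trivial]
    rw [this]
    positivity

lemma exists_good_eps (M : Matrix ι ι ℝ) {δ : ℝ} (hδ : 0 < δ) :
    ∃ ε : ℝ, 0 < ε ∧ ε < δ ∧ IsUnit (M + ε • (1 : Matrix ι ι ℝ)) := by
  set q := (-M).charpoly with hq
  have hqm : q ≠ 0 := (-M).charpoly_monic.ne_zero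
  have hroots : {x : ℝ | q.IsRoot x}.Finite := Polynomial.finite_setOf_isRoot hqm
  have hIoo : (Set.Ioo (0 : ℝ) δ).Infinite := Set.Ioo_infinite hδ
  obtain ⟨ε, hεmem⟩ := (hIoo.diff hroots).nonempty
  obtain ⟨⟨hε0, hεδ⟩, hεroot⟩ := hεmem
  refine ⟨ε, hε0, hεδ, ?_⟩
  have hdet : (M + ε • (1 : Matrix ι ι ℝ)).det = q.eval ε := by
    rw [hq, Matrix.charpoly, ← Polynomial.coe_evalRingHom, RingHom.map_det]
    congr 1
    ext i j
    by_cases h : i = j <;>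
      simp [h, Matrix.charmatrix_apply, Matrix.map_apply, Matrix.diagonal_apply,
        Matrix.one_apply, Matrix.add_apply, Matrix.smul_apply, add_comm]
  rw [Matrix.isUnit_iff_isUnit_det, hdet, isUnit_iff_ne_zero]
  exact fun h => hεroot h

end Helpers

set_option maxHeartbeats 1600000 in
/-- Dynamic output feedback stabilization: the closed-loop Lyapunov LMI is
feasible (in the controller matrices and `P ≻ 0`) iff the change-of-variables
LMIs (in `X, Y ≻ 0` and `Aₙ, Bₙ, Cₙ, Dₙ`) are feasible. -/
theorem stmt12 {n p m : ℕ}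
    (A : Matrix (Fin n) (Fin n) ℝ) (B : Matrix (Fin n) (Fin p) ℝ)
    (C : Matrix (Fin m) (Fin n) ℝ) :
    (∃ (Ac : Matrix (Fin n) (Fin n) ℝ) (Bc : Matrix (Fin n) (Fin m) ℝ)
       (Cc : Matrix (Fin p) (Fin n) ℝ) (Dc : Matrix (Fin p) (Fin m) ℝ)
       (P : Matrix (Fin n ⊕ Fin n) (Fin n ⊕ Fin n) ℝ),
      P.PosDef ∧
      (-((Matrix.fromBlocks (A + B * Dc * C) (B * Cc) (Bc * C) Ac)ᵀ * P)
        - P * (Matrix.fromBlocks (A + B * Dc * C) (B * Cc) (Bc * C) Ac)).PosDef) ↔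
    (∃ (X Y : Matrix (Fin n) (Fin n) ℝ) (An : Matrix (Fin n) (Fin n) ℝ)
       (Bn : Matrix (Fin n) (Fin m) ℝ) (Cn : Matrix (Fin p) (Fin n) ℝ)
       (Dn : Matrix (Fin p) (Fin m) ℝ),
      X.PosDef ∧ Y.PosDef ∧
      (Matrix.fromBlocks Y (1 : Matrix (Fin n) (Fin n) ℝ)
        (1 : Matrix (Fin n) (Fin n) ℝ) X).PosDef ∧
      (Matrix.fromBlocks
        (-(A * Y + B * Cn) - (A * Y + B * Cn)ᵀ) (-A - B * Dn * C - Anᵀ)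
        (-A - B * Dn * C - Anᵀ)ᵀ (-(X * A + Bn * C) - (X * A + Bn * C)ᵀ)).PosDef) := by
  constructor
  · -- (i) → (ii)
    rintro ⟨Ac, Bc, Cc, Dc, P, hP, hL1⟩
    set Abar : Matrix (Fin n ⊕ Fin n) (Fin n ⊕ Fin n) ℝ :=
      Matrix.fromBlocks (A + B * Dc * C) (B * Cc) (Bc * C) Ac with hAbar
    set S : Matrix (Fin n ⊕ Fin n) (Fin n ⊕ Fin n) ℝ := Matrix.fromBlocks 0 1 1 0 with hS
    have hST : Sᵀ = S := by rw [hS, Matrix.fromBlocks_transpose]; simp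
    have hN2T : (-(Abarᵀ * S) - S * Abar)ᵀ = -(Abarᵀ * S) - S * Abar := by
      simp only [Matrix.transpose_sub, Matrix.transpose_neg, Matrix.transpose_mul,
        Matrix.transpose_transpose, hST]
      abel
    obtain ⟨d1, hd1, hpert1⟩ := posdef_perturb P S hP (herm_of_transpose hST)
    obtain ⟨d2, hd2, hpert2⟩ := posdef_perturb _ _ hL1 (herm_of_transpose hN2T)
    obtain ⟨e, he0, helt, heU⟩ := exists_good_eps (P.toBlocks₁₂) (lt_min hd1 hd2)
    have habs1 : |e| < d1 := by
      rw [abs_of_pos he0]; exact helt.trans_le (min_le_left _ _)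
    have habs2 : |e| < d2 := by
      rw [abs_of_pos he0]; exact helt.trans_le (min_le_right _ _)
    set Q : Matrix (Fin n ⊕ Fin n) (Fin n ⊕ Fin n) ℝ := P + e • S with hQ
    have hQPD : Q.PosDef := hpert1 e habs1
    have hdist : -(Abarᵀ * Q) - Q * Abar
        = (-(Abarᵀ * P) - P * Abar) + e • (-(Abarᵀ * S) - S * Abar) := by
      rw [hQ]
      rw [Matrix.mul_add, Matrix.add_mul, Matrix.mul_smul, Matrix.smul_mul, smul_sub, smul_neg]
      abel
    have hL1' : (-(Abarᵀ * Q) - Q * Abar).PosDef := by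
      rw [hdist]; exact hpert2 e habs2
    have hQsym : Qᵀ = Q := herm_transpose hQPD.1
    have hQd : IsUnit Q.det := (Matrix.isUnit_iff_isUnit_det Q).mp hQPD.isUnit
    have hRPD : Q⁻¹.PosDef := hQPD.inv
    have hRsym : (Q⁻¹)ᵀ = Q⁻¹ := herm_transpose hRPD.1
    set Xm : Matrix (Fin n) (Fin n) ℝ := Q.toBlocks₁₁ with hXm
    set U : Matrix (Fin n) (Fin n) ℝ := Q.toBlocks₁₂ with hU
    set W : Matrix (Fin n) (Fin n) ℝ := Q.toBlocks₂₂ with hW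
    set Ym : Matrix (Fin n) (Fin n) ℝ := Q⁻¹.toBlocks₁₁ with hYm
    set V : Matrix (Fin n) (Fin n) ℝ := Q⁻¹.toBlocks₁₂ with hV
    set Z : Matrix (Fin n) (Fin n) ℝ := Q⁻¹.toBlocks₂₂ with hZ
    have hXPD : Xm.PosDef := posdef_toBlocks₁₁ hQPD
    have hWPD : W.PosDef := posdef_toBlocks₂₂ hQPD
    have hYPD : Ym.PosDef := posdef_toBlocks₁₁ hRPD
    have hXT : Xmᵀ = Xm := herm_transpose hXPD.1
    have hYT : Ymᵀ = Ym := herm_transpose hYPD.1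
    have hUunit : IsUnit U := by
      have h7 : (P + e • S).toBlocks₁₂ = P.toBlocks₁₂ + e • (1 : Matrix (Fin n) (Fin n) ℝ) := by
        ext i j
        simp [Matrix.toBlocks₁₂, hS, Matrix.fromBlocks, Matrix.one_apply]
      rw [hU, hQ, h7]
      exact heU
    have hQblocks : Q = Matrix.fromBlocks Xm U Uᵀ W := by
      rw [← Matrix.fromBlocks_toBlocks Q, Matrix.fromBlocks_inj]
      refine ⟨rfl, rfl, ?_, rfl⟩
      ext i j
      exact (congrFun (congrFun hQsym (Sum.inr i)) (Sum.inl j)).symm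
    have hRblocks : Q⁻¹ = Matrix.fromBlocks Ym V Vᵀ Z := by
      rw [← Matrix.fromBlocks_toBlocks Q⁻¹, Matrix.fromBlocks_inj]
      refine ⟨rfl, rfl, ?_, rfl⟩
      ext i j
      exact (congrFun (congrFun hRsym (Sum.inr i)) (Sum.inl j)).symm
    have hQR : Q * Q⁻¹ = 1 := Matrix.mul_nonsing_inv _ hQd
    have hRQ : Q⁻¹ * Q = 1 := Matrix.nonsing_inv_mul _ hQd
    rw [hRblocks, hQblocks, Matrix.fromBlocks_multiply,
      ← @Matrix.fromBlocks_one (Fin n) (Fin n), Matrix.fromBlocks_inj] at hQR hRQ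
    obtain ⟨ha, -, hb, -⟩ := hQR
    obtain ⟨hc, hd, -, -⟩ := hRQ
    have hVW : V * W = -(Ym * U) := by
      exact eq_neg_of_add_eq_zero_right hd
    have hVunit : IsUnit V := by
      have h6 : IsUnit (V * W) := by
        rw [hVW]; exact (hYPD.isUnit.mul hUunit).neg
      have h8 : IsUnit (V.det * W.det) := by
        rw [← Matrix.det_mul]; exact (Matrix.isUnit_iff_isUnit_det _).mp h6
      exact (Matrix.isUnit_iff_isUnit_det _).mpr (isUnit_of_mul_isUnit_left h8)
    have hVTunit : IsUnit Vᵀ := by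
      rw [Matrix.isUnit_iff_isUnit_det, Matrix.det_transpose]
      exact (Matrix.isUnit_iff_isUnit_det _).mp hVunit
    set Pi1 : Matrix (Fin n ⊕ Fin n) (Fin n ⊕ Fin n) ℝ :=
      Matrix.fromBlocks Ym 1 Vᵀ 0 with hPi1
    set Pi2 : Matrix (Fin n ⊕ Fin n) (Fin n ⊕ Fin n) ℝ :=
      Matrix.fromBlocks 1 Xm 0 Uᵀ with hPi2
    have hPi1u : IsUnit Pi1 := isUnit_pi1 Ym Vᵀ hVTunit
    have h2 : Q * Pi1 = Pi2 := by
      rw [hQblocks, hPi1, hPi2, Matrix.fromBlocks_multiply, Matrix.fromBlocks_inj]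
      exact ⟨ha, by simp, hb, by simp⟩
    have hG2 : Pi1ᵀ * Q * Pi1 = Matrix.fromBlocks Ym 1 1 Xm := by
      rw [Matrix.mul_assoc, h2, hPi1, hPi2, Matrix.fromBlocks_transpose,
        Matrix.fromBlocks_multiply, Matrix.fromBlocks_inj]
      refine ⟨by simp [hYT], ?_, by simp, by simp⟩
      rw [hYT, Matrix.transpose_transpose]
      exact hc
    have hGPD : (Matrix.fromBlocks Ym (1 : Matrix (Fin n) (Fin n) ℝ)
        (1 : Matrix (Fin n) (Fin n) ℝ) Xm).PosDef := by
      rw [← hG2]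
      exact posdef_conj hQPD Pi1 hPi1u
    set Cn : Matrix (Fin p) (Fin n) ℝ := Dc * C * Ym + Cc * Vᵀ with hCn
    set Bn : Matrix (Fin n) (Fin m) ℝ := Xm * B * Dc + U * Bc with hBn
    set An : Matrix (Fin n) (Fin n) ℝ :=
      (Xm * (A + B * Dc * C) + U * (Bc * C)) * Ym + (Xm * (B * Cc) + U * Ac) * Vᵀ with hAn
    set K : Matrix (Fin n ⊕ Fin n) (Fin n ⊕ Fin n) ℝ :=
      Matrix.fromBlocks (A * Ym + B * Cn) (A + B * Dc * C) An (Xm * A + Bn * C) with hK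
    have hKid : Pi2ᵀ * Abar * Pi1 = K := by
      rw [hPi2, hPi1, hAbar, hK, Matrix.fromBlocks_transpose, Matrix.fromBlocks_multiply,
        Matrix.fromBlocks_multiply, Matrix.fromBlocks_inj]
      refine ⟨?_, by simp, ?_, ?_⟩
      · rw [hCn]
        simp only [Matrix.transpose_one, Matrix.transpose_zero, Matrix.transpose_transpose,
          hXT, Matrix.one_mul, Matrix.zero_mul, Matrix.mul_one, Matrix.mul_zero,
          add_zero, zero_add, Matrix.add_mul, Matrix.mul_add, Matrix.mul_assoc]
        abel
      · rw [hAn]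
        simp only [Matrix.transpose_one, Matrix.transpose_zero, Matrix.transpose_transpose,
          hXT, Matrix.one_mul, Matrix.zero_mul, Matrix.mul_one, Matrix.mul_zero,
          add_zero, zero_add]
      · rw [hBn]
        simp only [Matrix.transpose_one, Matrix.transpose_zero, Matrix.transpose_transpose,
          hXT, Matrix.one_mul, Matrix.zero_mul, Matrix.mul_one, Matrix.mul_zero,
          add_zero, zero_add, Matrix.add_mul, Matrix.mul_add, Matrix.mul_assoc]
        abel
    have hcent := central (Abar := Abar) hQsym h2
    rw [hKid] at hcent
    refine ⟨Xm, Ym, An, Bn, Cn, Dc, hXPD, hYPD, hGPD, ?_⟩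
    rw [lmi2_eq, ← hK, ← hcent]
    exact posdef_conj hL1' Pi1 hPi1u
  · -- (ii) → (i)
    rintro ⟨X, Y, An, Bn, Cn, Dn, hX, hY, hG, hL2⟩
    have hXT : Xᵀ = X := herm_transpose hX.1
    have hYT : Yᵀ = Y := herm_transpose hY.1
    have hYd : IsUnit Y.det := (Matrix.isUnit_iff_isUnit_det Y).mp hY.isUnit
    have hYinvT : (Y⁻¹)ᵀ = Y⁻¹ := by rw [Matrix.transpose_nonsing_inv, hYT]
    -- Schur step: X - Y⁻¹ is positive definite
    set T : Matrix (Fin n ⊕ Fin n) (Fin n ⊕ Fin n) ℝ :=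
      Matrix.fromBlocks 1 (-(Y⁻¹)) 0 1 with hT
    have hTu : IsUnit T := by
      have h1 : T * Matrix.fromBlocks 1 (Y⁻¹) 0 1 =
          (1 : Matrix (Fin n ⊕ Fin n) (Fin n ⊕ Fin n) ℝ) := by
        rw [hT, Matrix.fromBlocks_multiply, ← @Matrix.fromBlocks_one (Fin n) (Fin n)]
        congr 1 <;> simp
      exact ⟨⟨_, _, h1, mul_eq_one_comm.mp h1⟩, rfl⟩
    have hTGT : Tᵀ * (Matrix.fromBlocks Y 1 1 X) * T =
        Matrix.fromBlocks Y 0 0 (X - Y⁻¹) := by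
      rw [hT, Matrix.fromBlocks_transpose, Matrix.fromBlocks_multiply,
        Matrix.fromBlocks_multiply, Matrix.fromBlocks_inj]
      refine ⟨by simp, by simp [Matrix.mul_nonsing_inv _ hYd],
        by simp [hYinvT, Matrix.nonsing_inv_mul _ hYd], ?_⟩
      simp [hYinvT, Matrix.nonsing_inv_mul _ hYd, Matrix.sub_mul, Matrix.neg_mul,
        Matrix.mul_neg]
      abel
    have hXYi : (X - Y⁻¹).PosDef := by
      have h3 := posdef_conj hG T hTu
      rw [hTGT] at h3
      have h4 := posdef_toBlocks₂₂ h3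
      rwa [Matrix.toBlocks_fromBlocks₂₂] at h4
    have hUeq : (1 : Matrix (Fin n) (Fin n) ℝ) - X * Y = -((X - Y⁻¹) * Y) := by
      rw [Matrix.sub_mul, Matrix.nonsing_inv_mul _ hYd, neg_sub]
    have hU : IsUnit ((1 : Matrix (Fin n) (Fin n) ℝ) - X * Y) := by
      rw [hUeq]; exact (hXYi.isUnit.mul hY.isUnit).neg
    set U : Matrix (Fin n) (Fin n) ℝ := 1 - X * Y with hUdef
    have hUd : IsUnit U.det := (Matrix.isUnit_iff_isUnit_det U).mp hU
    have hUT : Uᵀ = 1 - Y * X := by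
      rw [hUdef, Matrix.transpose_sub, Matrix.transpose_one, Matrix.transpose_mul, hXT, hYT]
    -- controller matrices
    set Cc : Matrix (Fin p) (Fin n) ℝ := Cn - Dn * C * Y with hCc
    set Bc : Matrix (Fin n) (Fin m) ℝ := U⁻¹ * (Bn - X * B * Dn) with hBc
    set Ac : Matrix (Fin n) (Fin n) ℝ :=
      U⁻¹ * (An - X * (A + B * Dn * C) * Y - X * (B * Cc) - (Bn - X * B * Dn) * C * Y)
      with hAc
    set P : Matrix (Fin n ⊕ Fin n) (Fin n ⊕ Fin n) ℝ :=
      Matrix.fromBlocks X U Uᵀ (Y * X * Y - Y) with hP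
    set Pi1 : Matrix (Fin n ⊕ Fin n) (Fin n ⊕ Fin n) ℝ :=
      Matrix.fromBlocks Y 1 1 0 with hPi1
    set Pi2 : Matrix (Fin n ⊕ Fin n) (Fin n ⊕ Fin n) ℝ :=
      Matrix.fromBlocks 1 X 0 Uᵀ with hPi2
    have hPi1u : IsUnit Pi1 := isUnit_pi1 Y 1 isUnit_one
    have hPsym : Pᵀ = P := by
      rw [hP, Matrix.fromBlocks_transpose, Matrix.fromBlocks_inj]
      refine ⟨hXT, Matrix.transpose_transpose U, rfl, ?_⟩
      simp [Matrix.transpose_sub, Matrix.transpose_mul, hXT, hYT, Matrix.mul_assoc]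
    have h2 : P * Pi1 = Pi2 := by
      rw [hP, hPi1, hPi2, Matrix.fromBlocks_multiply, Matrix.fromBlocks_inj]
      refine ⟨by simp [hUdef], by simp, ?_, by simp⟩
      rw [hUT]
      simp [Matrix.sub_mul, Matrix.mul_assoc]
    have hG2 : Pi1ᵀ * P * Pi1 = Matrix.fromBlocks Y 1 1 X := by
      rw [Matrix.mul_assoc, h2, hPi1, hPi2, Matrix.fromBlocks_transpose,
        Matrix.fromBlocks_multiply, Matrix.fromBlocks_inj]
      refine ⟨by simp [hYT], ?_, by simp, by simp⟩
      rw [hYT, hUT]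
      simp
    have hPPD : P.PosDef := by
      rw [← posdef_conj_iff Pi1 hPi1u, hG2]
      exact hG
    -- the closed-loop matrix
    set Abar : Matrix (Fin n ⊕ Fin n) (Fin n ⊕ Fin n) ℝ :=
      Matrix.fromBlocks (A + B * Dn * C) (B * Cc) (Bc * C) Ac with hAbar
    set K : Matrix (Fin n ⊕ Fin n) (Fin n ⊕ Fin n) ℝ :=
      Matrix.fromBlocks (A * Y + B * Cn) (A + B * Dn * C) An (X * A + Bn * C) with hK
    have hKid : Pi2ᵀ * Abar * Pi1 = K := by
      rw [hPi2, hPi1, hAbar, hK, Matrix.fromBlocks_transpose, Matrix.fromBlocks_multiply,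
        Matrix.fromBlocks_multiply, Matrix.fromBlocks_inj]
      have hUBc : U * Bc = Bn - X * B * Dn := by
        rw [hBc, Matrix.mul_nonsing_inv_cancel_left _ _ hUd]
      have hUAc : U * Ac =
          An - X * (A + B * Dn * C) * Y - X * (B * Cc) - (Bn - X * B * Dn) * C * Y := by
        rw [hAc, Matrix.mul_nonsing_inv_cancel_left _ _ hUd]
      refine ⟨?_, by simp [hXT, Matrix.transpose_transpose], ?_, ?_⟩
      · rw [hCc]
        simp only [Matrix.transpose_one, Matrix.transpose_zero, Matrix.transpose_transpose,
          hXT, Matrix.one_mul, Matrix.zero_mul, Matrix.mul_one,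
          Matrix.mul_zero, add_zero, zero_add, Matrix.add_mul, Matrix.mul_sub,
          Matrix.mul_assoc]
        abel
      · simp only [Matrix.transpose_one, Matrix.transpose_zero, Matrix.transpose_transpose,
          hXT, Matrix.one_mul, Matrix.zero_mul, Matrix.mul_one, Matrix.mul_zero,
          add_zero, zero_add]
        rw [← Matrix.mul_assoc U Bc C, hUBc]
        rw [show X * (B * Cc) + U * Ac = X * (B * Cc) + (An - X * (A + B * Dn * C) * Y
            - X * (B * Cc) - (Bn - X * B * Dn) * C * Y) from by rw [hUAc]]
        simp only [Matrix.add_mul, Matrix.sub_mul, Matrix.mul_assoc]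
        abel
      · simp only [Matrix.transpose_one, Matrix.transpose_zero, Matrix.transpose_transpose,
          hXT, Matrix.one_mul, Matrix.zero_mul, Matrix.mul_one, Matrix.mul_zero,
          add_zero, zero_add]
        rw [← Matrix.mul_assoc U Bc C, hUBc]
        simp only [Matrix.mul_add, Matrix.sub_mul, Matrix.mul_assoc]
        abel
    have hcent := central (Abar := Abar) hPsym h2
    rw [hKid] at hcent
    refine ⟨Ac, Bc, Cc, Dn, P, hPPD, ?_⟩
    rw [← posdef_conj_iff Pi1 hPi1u, hcent, hK, ← lmi2_eq]
    exact hL2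
end

section
/- Let A ∈ ℝ^{n×n}, B ∈ ℝ^{n×p}, C ∈ ℝ^{m×n}, D ∈ ℝ^{m×p}, let P ∈ ℝ^{n×n} be symmetric positive definite, Q ∈ ℝ^{m×m} with −Q positive definite, S ∈ ℝ^{m×p}, and R ∈ ℝ^{p×p} symmetric. Then the 2×2 block matrix [[P − AᵀPA + CᵀQC, −AᵀPB + CᵀS + CᵀQD], [⋆, −BᵀPB + DᵀQD + DᵀS + SᵀD + R]] is positive definite if and only if the 4×4 block matrix [[P, CᵀS, AᵀP, Cᵀ], [⋆, DᵀS + SᵀD + R, BᵀP, Dᵀ], [⋆, ⋆, P, 0], [⋆, ⋆, ⋆, −Q⁻¹]] is positive definite. -/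
open Matrix
open scoped Matrix

lemma elim_ne_zero_left' {m n : Type*} {x : m → ℝ} (y : n → ℝ) (hx : x ≠ 0) :
    Sum.elim x y ≠ 0 := by
  intro h
  exact hx (funext fun i => congrFun h (Sum.inl i))

lemma posDef_fromBlocks₂₂' {m n : Type*} [Fintype m] [Fintype n] [DecidableEq n]
    (A : Matrix m m ℝ) (B : Matrix m n ℝ) {D : Matrix n n ℝ} (hD : D.PosDef) [Invertible D] :
    (fromBlocks A B Bᵀ D).PosDef ↔ (A - B * D⁻¹ * Bᵀ).PosDef := by
  have hB : Bᵀ = Bᴴ := by ext i j; simp [conjTranspose_apply]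
  rw [hB, posDef_iff_dotProduct_mulVec, posDef_iff_dotProduct_mulVec, IsHermitian.fromBlocks₂₂ _ _ hD.1]
  refine and_congr_right fun h1 => ⟨fun h2 x hx => ?_, fun h2 x hx => ?_⟩
  · have := h2 (x := x ⊕ᵥ -((D⁻¹ * Bᴴ) *ᵥ x)) (elim_ne_zero_left' _ hx)
    rw [dotProduct_mulVec, Matrix.schur_complement_eq₂₂ A B _ _ hD.1] at this
    simpa [dotProduct_mulVec] using this
  · have hx' : x = (x ∘ Sum.inl) ⊕ᵥ (x ∘ Sum.inr) := (Sum.elim_comp_inl_inr x).symm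
    rw [dotProduct_mulVec, hx', Matrix.schur_complement_eq₂₂ A B _ _ hD.1]
    by_cases h0 : x ∘ Sum.inl = 0
    · have hy : x ∘ Sum.inr ≠ 0 := by
        intro h
        apply hx
        funext i
        cases i with
        | inl i => exact congrFun h0 i
        | inr i => exact congrFun h i
      have hpos := hD.dotProduct_mulVec_pos hy
      simp only [h0, Matrix.mulVec_zero, zero_add, star_zero, Matrix.zero_vecMul,
        dotProduct_zero, zero_dotProduct, add_zero]
      simpa [dotProduct_mulVec] using hpos
    · have hpos := h2 h0
      have hnn := hD.posSemidef.dotProduct_mulVec_nonneg ((D⁻¹ * Bᴴ) *ᵥ (x ∘ Sum.inl) + x ∘ Sum.inr)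
      rw [dotProduct_mulVec] at hpos hnn
      positivity
def block4 {I J K L : Type*}
    (M11 : Matrix I I ℝ) (M12 : Matrix I J ℝ) (M13 : Matrix I K ℝ) (M14 : Matrix I L ℝ)
    (M21 : Matrix J I ℝ) (M22 : Matrix J J ℝ) (M23 : Matrix J K ℝ) (M24 : Matrix J L ℝ)
    (M31 : Matrix K I ℝ) (M32 : Matrix K J ℝ) (M33 : Matrix K K ℝ) (M34 : Matrix K L ℝ)
    (M41 : Matrix L I ℝ) (M42 : Matrix L J ℝ) (M43 : Matrix L K ℝ) (M44 : Matrix L L ℝ) :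
    Matrix ((I ⊕ J) ⊕ (K ⊕ L)) ((I ⊕ J) ⊕ (K ⊕ L)) ℝ :=
  Matrix.fromBlocks (Matrix.fromBlocks M11 M12 M21 M22)
    (Matrix.fromBlocks M13 M14 M23 M24)
    (Matrix.fromBlocks M31 M32 M41 M42)
    (Matrix.fromBlocks M33 M34 M43 M44)

/-- The classical discrete-time (Q,S,R)-dissipativity LMI is positive definite
iff its 4×4 block reformulation is positive definite. -/
theorem stmt16 {n p m : ℕ}
    (A : Matrix (Fin n) (Fin n) ℝ) (B : Matrix (Fin n) (Fin p) ℝ)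
    (C : Matrix (Fin m) (Fin n) ℝ) (D : Matrix (Fin m) (Fin p) ℝ)
    (P : Matrix (Fin n) (Fin n) ℝ) (hP : P.PosDef)
    (Q : Matrix (Fin m) (Fin m) ℝ) (hQ : (-Q).PosDef)
    (S : Matrix (Fin m) (Fin p) ℝ)
    (R : Matrix (Fin p) (Fin p) ℝ) (hR : Rᵀ = R) :
    (Matrix.fromBlocks
      (P - Aᵀ * P * A + Cᵀ * Q * C) (-(Aᵀ * P * B) + Cᵀ * S + Cᵀ * Q * D)
      (-(Aᵀ * P * B) + Cᵀ * S + Cᵀ * Q * D)ᵀ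
      (-(Bᵀ * P * B) + Dᵀ * Q * D + Dᵀ * S + Sᵀ * D + R)).PosDef ↔
    (block4 P (Cᵀ * S) (Aᵀ * P) Cᵀ
      (Cᵀ * S)ᵀ (Dᵀ * S + Sᵀ * D + R) (Bᵀ * P) Dᵀ
      (Aᵀ * P)ᵀ (Bᵀ * P)ᵀ P (0 : Matrix (Fin n) (Fin m) ℝ)
      C D (0 : Matrix (Fin m) (Fin n) ℝ) (-Q⁻¹)).PosDef := by
  have hPt : Pᵀ = P := by
    have := hP.1
    ext i j
    simpa [conjTranspose_apply] using (congrFun (congrFun this j) i).symm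
  have hQt : Qᵀ = Q := by
    have h2 : Q.IsHermitian := by simpa using hQ.1.neg
    ext i j
    simpa [conjTranspose_apply] using (congrFun (congrFun h2 j) i).symm
  have hPu : IsUnit P.det := isUnit_iff_ne_zero.mpr hP.det_pos.ne'
  have hQu : IsUnit Q.det := by
    have h1 : (0:ℝ) < (-Q).det := hQ.det_pos
    rw [Matrix.det_neg] at h1
    refine isUnit_iff_ne_zero.mpr fun h => ?_
    rw [h, mul_zero] at h1
    exact lt_irrefl _ h1
  have hQinv : (-Q)⁻¹ = -Q⁻¹ := by
    apply Matrix.inv_eq_right_inv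
    rw [neg_mul_neg, Matrix.mul_nonsing_inv _ hQu]
  have hnQinv : (-Q⁻¹).PosDef := hQinv ▸ hQ.inv
  haveI : Invertible (-Q⁻¹) := hnQinv.isUnit.invertible
  set Z : Matrix ((Fin n) ⊕ (Fin m)) ((Fin n) ⊕ (Fin m)) ℝ :=
    fromBlocks P 0 (0 : Matrix (Fin m) (Fin n) ℝ) (-Q⁻¹) with hZdef
  have hZ : Z.PosDef := by
    have h := posDef_fromBlocks₂₂' P (0 : Matrix (Fin n) (Fin m) ℝ) hnQinv
    simp only [Matrix.transpose_zero] at h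
    rw [hZdef, h]
    simpa using hP
  haveI : Invertible Z := hZ.isUnit.invertible
  have hZinv : Z⁻¹ = fromBlocks P⁻¹ 0 (0 : Matrix (Fin m) (Fin n) ℝ) (-Q) := by
    apply Matrix.inv_eq_right_inv
    rw [hZdef, fromBlocks_multiply]
    simp [Matrix.mul_nonsing_inv _ hPu, Matrix.nonsing_inv_mul _ hQu, ← fromBlocks_one]
  set Bblk : Matrix ((Fin n) ⊕ (Fin p)) ((Fin n) ⊕ (Fin m)) ℝ :=
    fromBlocks (Aᵀ * P) Cᵀ (Bᵀ * P) Dᵀ with hBdef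
  have hblock : (block4 P (Cᵀ * S) (Aᵀ * P) Cᵀ
      (Cᵀ * S)ᵀ (Dᵀ * S + Sᵀ * D + R) (Bᵀ * P) Dᵀ
      (Aᵀ * P)ᵀ (Bᵀ * P)ᵀ P (0 : Matrix (Fin n) (Fin m) ℝ)
      C D (0 : Matrix (Fin m) (Fin n) ℝ) (-Q⁻¹)) =
      fromBlocks (fromBlocks P (Cᵀ * S) (Cᵀ * S)ᵀ (Dᵀ * S + Sᵀ * D + R)) Bblk Bblkᵀ Z := by
    rw [block4, hBdef, hZdef, fromBlocks_transpose]
    simp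
  rw [hblock, posDef_fromBlocks₂₂' _ _ hZ, hZinv]
  have key : fromBlocks P (Cᵀ * S) (Cᵀ * S)ᵀ (Dᵀ * S + Sᵀ * D + R) -
      Bblk * fromBlocks P⁻¹ 0 (0 : Matrix (Fin m) (Fin n) ℝ) (-Q) * Bblkᵀ =
      Matrix.fromBlocks
      (P - Aᵀ * P * A + Cᵀ * Q * C) (-(Aᵀ * P * B) + Cᵀ * S + Cᵀ * Q * D)
      (-(Aᵀ * P * B) + Cᵀ * S + Cᵀ * Q * D)ᵀ
      (-(Bᵀ * P * B) + Dᵀ * Q * D + Dᵀ * S + Sᵀ * D + R) := by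
    rw [hBdef, fromBlocks_transpose, fromBlocks_multiply, fromBlocks_multiply,
      sub_eq_add_neg, fromBlocks_neg, fromBlocks_add, fromBlocks_inj]
    have hc : ∀ {k : ℕ} (X : Matrix (Fin n) (Fin k) ℝ), P⁻¹ * (P * X) = X :=
      fun X => Matrix.nonsing_inv_mul_cancel_left _ _ hPu
    refine ⟨?_, ?_, ?_, ?_⟩ <;>
    · simp only [Matrix.mul_zero, Matrix.zero_mul, add_zero, zero_add, transpose_mul,
        transpose_transpose, transpose_add, transpose_neg, Matrix.mul_neg, Matrix.neg_mul, neg_neg, hPt, hQt, Matrix.mul_assoc, hc]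
      abel
  rw [key]
end
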